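/- arXiv:1401.3297 — 6 statements merged into one kernel-verified Lean document; each statement's English description precedes it below -/
import Mathlib

section
/- For every α ∈ [2/3, 1), the series ∑_{i=1}^∞ q₋ᵢ(α) converges and α + ∑_{i=1}^∞ q₋ᵢ(α) = 1. Since each q₋ᵢ(α) ≥ 0, the assignment q₁ = α, q₋ᵢ = q₋ᵢ(α) for i ≥ 1 defines a probability distribution on {…, −3, −2, −1, 1} ⊂ ℤ. -/
/-- The peeling step weight `q₋ᵢ(α)` for `i ≥ 1`:
`q₋ᵢ(α) = (2/4^i) · ((2i−2)!/((i−1)!·(i+1)!)) · (2/α − 2)^i · ((3α−2)·i + 1)`. -/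
noncomputable def qneg (α : ℝ) (i : ℕ) : ℝ :=
  2 / 4 ^ i *
    ((Nat.factorial (2 * i - 2) : ℝ) /
      ((Nat.factorial (i - 1) : ℝ) * (Nat.factorial (i + 1) : ℝ))) *
    (2 / α - 2) ^ i * ((3 * α - 2) * i + 1)

/-- Auxiliary telescoping term. -/
noncomputable def qT (α : ℝ) (n : ℕ) : ℝ :=
  (1 - α) * (Nat.centralBinom n : ℝ) * ((2 / α - 2) / 4) ^ n / (n + 1)

lemma cb_le_four_pow (n : ℕ) : Nat.centralBinom n ≤ 4 ^ n := by
  induction n with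
  | zero => simp
  | succ n ih =>
    have h := Nat.succ_mul_centralBinom_succ n
    have : (n + 1) * Nat.centralBinom (n + 1) ≤ (n + 1) * 4 ^ (n + 1) := by
      rw [h]; calc 2 * (2 * n + 1) * Nat.centralBinom n ≤ (4 * (n + 1)) * 4 ^ n := by
                    exact Nat.mul_le_mul (by omega) ih
           _ = (n + 1) * 4 ^ (n + 1) := by ring
    exact Nat.le_of_mul_le_mul_left this (Nat.succ_pos n)

lemma qneg_telescope (α : ℝ) (hα : α ≠ 0) (n : ℕ) :
    qneg α (n + 1) = qT α n - qT α (n + 1) := by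
  have h1 : (Nat.factorial (2 * n) : ℝ) =
      (Nat.centralBinom n : ℝ) * Nat.factorial n * Nat.factorial n := by
    have := Nat.choose_mul_factorial_mul_factorial (show n ≤ 2 * n by omega)
    rw [show 2 * n - n = n by omega] at this
    rw [Nat.centralBinom]
    exact_mod_cast this.symm
  have h2 : (Nat.centralBinom (n + 1) : ℝ) =
      2 * (2 * n + 1) * (Nat.centralBinom n : ℝ) / (n + 1) := by
    rw [eq_div_iff (by positivity)]
    rw [mul_comm]
    exact_mod_cast Nat.succ_mul_centralBinom_succ n
  have e1 : 2 * (n + 1) - 2 = 2 * n := by omega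
  have e2 : n + 1 - 1 = n := by omega
  rw [qneg, qT, qT, e1, e2, h1, h2]
  have e3 : (Nat.factorial (n + 1 + 1) : ℝ) = (n + 2) * (n + 1) * Nat.factorial n := by
    push_cast [Nat.factorial_succ]; ring
  rw [e3, pow_succ, pow_succ, div_pow]
  have hF : (Nat.factorial n : ℝ) ≠ 0 := by positivity
  have hn1 : ((n : ℝ) + 1) ≠ 0 := by positivity
  have hn2 : ((n : ℝ) + 2) ≠ 0 := by positivity
  have h4 : (4 : ℝ) ^ n ≠ 0 := by positivity
  push_cast
  simp only [div_pow, pow_succ]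
  generalize (2 / α - 2) ^ n = y
  field_simp
  ring

/-- For `α ∈ [2/3, 1)` the series `∑_{i≥1} q₋ᵢ(α)` converges,
`α + ∑_{i≥1} q₋ᵢ(α) = 1`, and all the weights are nonnegative, so that
`q₁ = α`, `q₋ᵢ = q₋ᵢ(α)` defines a probability distribution on `{…,−3,−2,−1,1}`. -/
theorem qneg_prob_distribution (α : ℝ) (hα : α ∈ Set.Ico (2/3 : ℝ) 1) :
    Summable (fun i : ℕ => qneg α (i + 1)) ∧
    α + ∑' i : ℕ, qneg α (i + 1) = 1 ∧
    (∀ i : ℕ, 1 ≤ i → 0 ≤ qneg α i) := by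
  obtain ⟨h23, h1⟩ := hα
  have hαpos : 0 < α := lt_of_lt_of_le (by norm_num) h23
  have hαne : α ≠ 0 := ne_of_gt hαpos
  have hx : 0 ≤ 2 / α - 2 := by
    rw [sub_nonneg, le_div_iff₀ hαpos]; linarith
  have hnn : ∀ i : ℕ, 1 ≤ i → 0 ≤ qneg α i := by
    intro i hi
    have h3 : (0 : ℝ) ≤ 3 * α - 2 := by linarith
    have h4 : (0 : ℝ) ≤ (3 * α - 2) * i + 1 := by
      have := mul_nonneg h3 (Nat.cast_nonneg (α := ℝ) i)
      linarith
    have h5 : (0 : ℝ) ≤ (2 / α - 2) ^ i := pow_nonneg hx i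
    apply mul_nonneg (mul_nonneg (mul_nonneg (by positivity) (by positivity)) h5) h4
  -- bound on qT and limit
  have hy : 0 ≤ (2 / α - 2) / 4 := by positivity
  have hy4 : (2 / α - 2) / 4 ≤ 1 / 4 := by
    have : 2 / α ≤ 3 := by rw [div_le_iff₀ hαpos]; linarith
    linarith
  have hTnn : ∀ n : ℕ, 0 ≤ qT α n := by
    intro n
    apply div_nonneg _ (by positivity)
    apply mul_nonneg (mul_nonneg (by linarith) (Nat.cast_nonneg _)) (pow_nonneg hy n)
  have hTle : ∀ n : ℕ, qT α n ≤ (1 - α) * (1 / (n + 1)) := by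
    intro n
    have hb : (Nat.centralBinom n : ℝ) * ((2 / α - 2) / 4) ^ n ≤ 1 := by
      calc (Nat.centralBinom n : ℝ) * ((2 / α - 2) / 4) ^ n
          ≤ (4 : ℝ) ^ n * (1 / 4 : ℝ) ^ n := by
            apply mul_le_mul _ (pow_le_pow_left₀ hy hy4 n) (pow_nonneg hy n) (by positivity)
            exact_mod_cast cb_le_four_pow n
        _ = 1 := by rw [← mul_pow]; norm_num
    have h6 : (1 - α) * ((Nat.centralBinom n : ℝ) * ((2 / α - 2) / 4) ^ n) ≤ (1 - α) * 1 :=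
      mul_le_mul_of_nonneg_left hb (by linarith)
    have h7 : (0 : ℝ) < (n : ℝ) + 1 := by positivity
    calc qT α n = (1 - α) * ((Nat.centralBinom n : ℝ) * ((2 / α - 2) / 4) ^ n) / (n + 1) := by
          rw [qT]; ring
      _ ≤ (1 - α) * 1 / (n + 1) := by gcongr
      _ = (1 - α) * (1 / (n + 1)) := by ring
  have htend0 : Filter.Tendsto (fun n : ℕ => (1 - α) * (1 / ((n : ℝ) + 1)))
      Filter.atTop (nhds 0) := by
    have := tendsto_one_div_add_atTop_nhds_zero_nat.const_mul (1 - α)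
    simpa using this
  have hTtend : Filter.Tendsto (qT α) Filter.atTop (nhds 0) :=
    squeeze_zero hTnn hTle htend0
  have hT0 : qT α 0 = 1 - α := by simp [qT]
  have hsum : HasSum (fun i : ℕ => qneg α (i + 1)) (1 - α) := by
    rw [hasSum_iff_tendsto_nat_of_nonneg (fun i => hnn (i + 1) (by omega))]
    have hps : ∀ n : ℕ, ∑ i ∈ Finset.range n, qneg α (i + 1) = qT α 0 - qT α n := by
      intro n
      rw [← Finset.sum_range_sub' (qT α) n]
      exact Finset.sum_congr rfl fun i _ => qneg_telescope α hαne i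
    simp_rw [hps, hT0]
    have := (tendsto_const_nhds (x := qT α 0)).sub hTtend
    rw [sub_zero, hT0] at this
    exact this
  refine ⟨hsum.summable, ?_, hnn⟩
  rw [hsum.tsum_eq]; ring
end

section
/- For every α ∈ [2/3, 1), the series ∑_{i=1}^∞ i·q₋ᵢ(α) converges and the mean step of the distribution q, namely δ(α) := α − ∑_{i=1}^∞ i·q₋ᵢ(α), equals √(α(3α−2)). In particular δ(α) > 0 whenever α ∈ (2/3, 1), and δ(α) < α. -/
open Finset

lemma cbR_cat (n : ℕ) : ((n : ℝ) + 1) * (catalan n : ℝ) = (Nat.centralBinom n : ℝ) := by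
  exact_mod_cast congrArg (fun m : ℕ => (m : ℝ)) (succ_mul_catalan_eq_centralBinom n)

lemma cbR_succ (n : ℕ) :
    ((n : ℝ) + 1) * (Nat.centralBinom (n + 1) : ℝ) = (4 * n + 2) * (Nat.centralBinom n : ℝ) := by
  have := congrArg (fun m : ℕ => (m : ℝ)) (Nat.succ_mul_centralBinom_succ n)
  push_cast at this
  linarith

lemma cbR_four (n : ℕ) :
    (Nat.centralBinom (n + 1) : ℝ) + 2 * (catalan n : ℝ) = 4 * (Nat.centralBinom n : ℝ) := by
  have h0 := cbR_cat n
  have h1 := cbR_succ n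
  have hn : ((n : ℝ) + 1) ≠ 0 := by positivity
  have key : ((n : ℝ) + 1) * ((Nat.centralBinom (n + 1) : ℝ) + 2 * (catalan n : ℝ))
      = ((n : ℝ) + 1) * (4 * (Nat.centralBinom n : ℝ)) := by linear_combination h1 + 2 * h0
  exact mul_left_cancel₀ hn key

lemma cat_quarter_sum (N : ℕ) :
    ∑ n ∈ range N, (catalan n : ℝ) / 4 ^ (n + 1)
      = 1 / 2 - (Nat.centralBinom N : ℝ) / (2 * 4 ^ N) := by
  induction N with
  | zero => simp [Nat.centralBinom_zero]
  | succ N ih =>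
    rw [sum_range_succ, ih]
    have h := cbR_four N
    have h4 : (4 : ℝ) ^ N ≠ 0 := by positivity
    have h4' : (4:ℝ) ^ (N+1) = 4 * 4 ^ N := by ring
    field_simp
    linear_combination (4:ℝ) ^ N * h

lemma cat_quarter_le (N : ℕ) : ∑ n ∈ range N, (catalan n : ℝ) / 4 ^ (n + 1) ≤ 1 / 2 := by
  rw [cat_quarter_sum]
  have : (0:ℝ) ≤ (Nat.centralBinom N : ℝ) / (2 * 4 ^ N) := by positivity
  linarith

section GF
variable {x : ℝ}

lemma cat_partial_le (hx0 : 0 ≤ x) (hx4 : x ≤ 1 / 4) (N : ℕ) :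
    ∑ n ∈ range N, (catalan n : ℝ) * x ^ (n + 1) ≤ 1 / 2 := by
  refine le_trans (Finset.sum_le_sum fun n _ => ?_) (cat_quarter_le N)
  have h1 : x ^ (n+1) ≤ (1/4 : ℝ) ^ (n+1) := pow_le_pow_left₀ hx0 hx4 _
  have h2 : ((1:ℝ)/4) ^ (n+1) = 1 / 4 ^ (n+1) := by rw [div_pow]; norm_num
  have h3 : (0:ℝ) ≤ (catalan n : ℝ) := by positivity
  calc (catalan n : ℝ) * x ^ (n+1) ≤ (catalan n : ℝ) * (1/4:ℝ)^(n+1) := by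
        exact mul_le_mul_of_nonneg_left h1 h3
    _ = (catalan n : ℝ) / 4 ^ (n+1) := by rw [h2]; ring

lemma cat_summable (hx0 : 0 ≤ x) (hx4 : x ≤ 1 / 4) : Summable (fun n => (catalan n : ℝ) * x ^ (n + 1)) :=
  summable_of_sum_range_le (fun n => by positivity) (cat_partial_le hx0 hx4)

lemma cat_tsum_le (hx0 : 0 ≤ x) (hx4 : x ≤ 1 / 4) : (∑' n, (catalan n : ℝ) * x ^ (n + 1)) ≤ 1 / 2 :=
  Real.tsum_le_of_sum_range_le (fun n => by positivity) (cat_partial_le hx0 hx4)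

set_option maxHeartbeats 1000000 in
lemma cat_tsum_eq (hx0 : 0 ≤ x) (hx4 : x ≤ 1 / 4) : (∑' n, (catalan n : ℝ) * x ^ (n + 1))
    = (1 - Real.sqrt (1 - 4 * x)) / 2 := by
  set y := ∑' n, (catalan n : ℝ) * x ^ (n + 1) with hy
  have hsum := cat_summable hx0 hx4
  have hy0 : 0 ≤ y := tsum_nonneg (fun n => by positivity)
  have hyle : y ≤ 1 / 2 := cat_tsum_le hx0 hx4
  -- Cauchy product
  have hprod : Summable (fun p : ℕ × ℕ =>
      ((catalan p.1 : ℝ) * x ^ (p.1 + 1)) * ((catalan p.2 : ℝ) * x ^ (p.2 + 1))) :=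
    hsum.mul_of_nonneg hsum (fun n => by positivity) (fun n => by positivity)
  have hsq : y * y = ∑' n, ∑ k ∈ range (n + 1),
      ((catalan k : ℝ) * x ^ (k + 1)) * ((catalan (n - k) : ℝ) * x ^ (n - k + 1)) :=
    Summable.tsum_mul_tsum_eq_tsum_sum_range hsum hsum hprod
  have hinner : ∀ n, ∑ k ∈ range (n + 1),
      ((catalan k : ℝ) * x ^ (k + 1)) * ((catalan (n - k) : ℝ) * x ^ (n - k + 1))
      = (catalan (n + 1) : ℝ) * x ^ (n + 2) := by
    intro n
    have : ∀ k ∈ range (n + 1),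
        ((catalan k : ℝ) * x ^ (k + 1)) * ((catalan (n - k) : ℝ) * x ^ (n - k + 1))
        = ((catalan k : ℝ) * (catalan (n - k) : ℝ)) * x ^ (n + 2) := by
      intro k hk
      have hkn : k ≤ n := Nat.lt_succ_iff.mp (mem_range.mp hk)
      have hpow : (k + 1) + (n - k + 1) = n + 2 := by omega
      rw [← hpow, pow_add]; ring
    rw [Finset.sum_congr rfl this, ← Finset.sum_mul]
    congr 1
    have hc : (catalan (n+1) : ℝ) = ∑ k ∈ range (n + 1), ((catalan k : ℝ) * (catalan (n - k) : ℝ)) := by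
      have := catalan_succ' n
      rw [Nat.sum_antidiagonal_eq_sum_range_succ (fun a b => catalan a * catalan b) n] at this
      exact_mod_cast congrArg (fun m : ℕ => (m : ℝ)) this
    rw [hc]
  have hshift : y = x + ∑' n, (catalan (n + 1) : ℝ) * x ^ (n + 2) := by
    rw [hy, Summable.tsum_eq_zero_add hsum]
    norm_num
  have hsq2 : y * y = ∑' n, (catalan (n + 1) : ℝ) * x ^ (n + 2) := by
    rw [hsq]; exact tsum_congr hinner
  have hquad : y = x + y * y := by rw [hsq2]; linarith [hshift]
  -- extract the root
  have hs : Real.sqrt (1 - 4 * x) = 1 - 2 * y := by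
    have h1 : 1 - 4 * x = (1 - 2 * y) ^ 2 := by nlinarith [hquad]
    rw [h1, Real.sqrt_sq (by linarith)]
  rw [hs]; ring

end GF

lemma cb_summable {x : ℝ} (hx0 : 0 ≤ x) (hx4 : x < 1 / 4) :
    Summable (fun n => (Nat.centralBinom n : ℝ) * x ^ n) := by
  refine summable_of_ratio_norm_eventually_le (r := 4 * x) (by linarith) ?_
  filter_upwards with n
  have h := cbR_four n
  have hc : (0:ℝ) ≤ (catalan n : ℝ) := by positivity
  have hb : (Nat.centralBinom (n+1) : ℝ) ≤ 4 * (Nat.centralBinom n : ℝ) := by linarith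
  have h1 : (0:ℝ) ≤ (Nat.centralBinom (n+1) : ℝ) * x ^ (n+1) := by positivity
  have h2 : (0:ℝ) ≤ (Nat.centralBinom n : ℝ) * x ^ n := by positivity
  rw [Real.norm_eq_abs, Real.norm_eq_abs, abs_of_nonneg h1, abs_of_nonneg h2]
  calc (Nat.centralBinom (n+1) : ℝ) * x ^ (n+1)
      ≤ 4 * (Nat.centralBinom n : ℝ) * x ^ (n+1) := by
        exact mul_le_mul_of_nonneg_right hb (by positivity)
    _ = 4 * x * ((Nat.centralBinom n : ℝ) * x ^ n) := by ring

lemma cb_tsum_eq {x : ℝ} (hx0 : 0 ≤ x) (hx4 : x < 1 / 4) :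
    (∑' n, (Nat.centralBinom n : ℝ) * x ^ n) = 1 / Real.sqrt (1 - 4 * x) := by
  have hS := cb_summable hx0 hx4
  set S := ∑' n, (Nat.centralBinom n : ℝ) * x ^ n with hSdef
  set y := ∑' n, (catalan n : ℝ) * x ^ (n + 1) with hydef
  have hy := cat_tsum_eq hx0 hx4.le
  have hcat := cat_summable hx0 hx4.le
  have hS1 : Summable (fun n => (Nat.centralBinom n : ℝ) * x ^ n * (4 * x)) := hS.mul_right _
  have hsplit : ∀ n : ℕ, (Nat.centralBinom (n+1) : ℝ) * x ^ (n+1)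
      = (Nat.centralBinom n : ℝ) * x ^ n * (4 * x) - 2 * ((catalan n : ℝ) * x ^ (n+1)) := by
    intro n
    have h := cbR_four n
    have : (Nat.centralBinom (n+1) : ℝ) = 4 * (Nat.centralBinom n : ℝ) - 2 * (catalan n : ℝ) := by
      linarith
    rw [this]; ring
  have hshift : S = 1 + ∑' n, (Nat.centralBinom (n+1) : ℝ) * x ^ (n+1) := by
    rw [hSdef, Summable.tsum_eq_zero_add hS]
    norm_num [Nat.centralBinom_zero]
  have htail : (∑' n, (Nat.centralBinom (n+1) : ℝ) * x ^ (n+1))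
      = S * (4 * x) - 2 * y := by
    calc (∑' n, (Nat.centralBinom (n+1) : ℝ) * x ^ (n+1))
        = ∑' n, ((Nat.centralBinom n : ℝ) * x ^ n * (4 * x)
            - 2 * ((catalan n : ℝ) * x ^ (n+1))) := tsum_congr hsplit
      _ = (∑' n, (Nat.centralBinom n : ℝ) * x ^ n * (4 * x))
            - ∑' n, 2 * ((catalan n : ℝ) * x ^ (n+1)) :=
          Summable.tsum_sub hS1 (hcat.mul_left 2)
      _ = S * (4 * x) - 2 * y := by rw [tsum_mul_right, tsum_mul_left]
  have hy' : y = (1 - Real.sqrt (1 - 4 * x)) / 2 := hydef.trans hy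
  have hSeq : S * (1 - 4 * x) = Real.sqrt (1 - 4 * x) := by
    have h1 : S = 1 + (S * (4 * x) - 2 * y) := by
      conv_lhs => rw [hshift]
      rw [htail]
    rw [hy'] at h1
    linarith
  have hpos : 0 < 1 - 4 * x := by linarith
  have hs : Real.sqrt (1 - 4 * x) ^ 2 = 1 - 4 * x := Real.sq_sqrt hpos.le
  have hsne : Real.sqrt (1 - 4 * x) ≠ 0 := by positivity
  rw [eq_div_iff hsne]
  have h2 : Real.sqrt (1 - 4 * x) * (S * Real.sqrt (1 - 4 * x))
      = Real.sqrt (1 - 4 * x) * 1 := by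
    linear_combination S * hs + hSeq
  exact mul_left_cancel₀ hsne h2


lemma qneg_term' (α x : ℝ) (hα0 : α ≠ 0) (hx : 2/α - 2 = 4 * x) (j : ℕ) :
    ((j + 1 : ℕ) : ℝ) * qneg α (j + 1)
      = (3*α-2)/2 * ((Nat.centralBinom (j+1) : ℝ) * x ^ (j+1))
        + α * ((catalan j : ℝ) * x ^ (j+1))
        + (1-α) * ((catalan (j+1) : ℝ) * x ^ (j+1)) := by
  have hj1 : ((j:ℝ) + 1) ≠ 0 := by positivity
  have hj2 : ((j:ℝ) + 2) ≠ 0 := by positivity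
  have hfj : ((Nat.factorial j : ℕ) : ℝ) ≠ 0 := by
    exact_mod_cast Nat.factorial_ne_zero j
  have hfac : ((Nat.factorial (2*j) : ℕ) : ℝ)
      = (Nat.centralBinom j : ℝ) * (Nat.factorial j : ℝ) * (Nat.factorial j : ℝ) := by
    have h := Nat.choose_mul_factorial_mul_factorial (by omega : j ≤ 2*j)
    rw [show 2*j - j = j from by omega] at h
    rw [Nat.centralBinom_eq_two_mul_choose]
    exact_mod_cast h.symm
  have hc1 : (catalan j : ℝ) = (Nat.centralBinom j : ℝ) / ((j:ℝ)+1) := by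
    rw [eq_div_iff hj1]; linear_combination cbR_cat j
  have hb1 : (Nat.centralBinom (j+1) : ℝ) = (4*(j:ℝ)+2) * (Nat.centralBinom j : ℝ) / ((j:ℝ)+1) := by
    rw [eq_div_iff hj1]; linear_combination cbR_succ j
  have hc2 : (catalan (j+1) : ℝ)
      = (4*(j:ℝ)+2) * (Nat.centralBinom j : ℝ) / (((j:ℝ)+1) * ((j:ℝ)+2)) := by
    have h := cbR_cat (j+1)
    push_cast at h
    rw [eq_div_iff (by positivity)]
    rw [hb1] at h
    field_simp at h
    linarith
  unfold qneg
  rw [show 2*(j+1)-2 = 2*j from by omega, show (j+1)-1 = j from by omega, hfac, hx, mul_pow,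
    hc1, hb1, hc2]
  have hfs : ((Nat.factorial (j+1+1) : ℕ) : ℝ) = ((j:ℝ)+2) * (((j:ℝ)+1) * (Nat.factorial j : ℝ)) := by
    rw [Nat.factorial_succ, Nat.factorial_succ]; push_cast; ring
  rw [hfs]
  have h4 : ((4:ℝ) ^ (j+1)) ≠ 0 := by positivity
  push_cast
  field_simp
  ring


/-- For `α ∈ [2/3, 1)` the series `∑_{i≥1} i·q₋ᵢ(α)` converges and the mean step
`δ(α) = α − ∑_{i≥1} i·q₋ᵢ(α)` equals `√(α(3α−2))`; moreover `δ(α) < α`, and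
`δ(α) > 0` whenever `α ∈ (2/3, 1)`. -/
theorem qneg_mean_drift (α : ℝ) (hα : α ∈ Set.Ico (2/3 : ℝ) 1) :
    Summable (fun i : ℕ => ((i + 1 : ℕ) : ℝ) * qneg α (i + 1)) ∧
    α - ∑' i : ℕ, ((i + 1 : ℕ) : ℝ) * qneg α (i + 1) = Real.sqrt (α * (3 * α - 2)) ∧
    Real.sqrt (α * (3 * α - 2)) < α ∧
    (α ∈ Set.Ioo (2/3 : ℝ) 1 → 0 < Real.sqrt (α * (3 * α - 2))) := by
  obtain ⟨h23, h1⟩ := hα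
  have hα0 : 0 < α := by linarith
  set x : ℝ := (1 - α) / (2 * α) with hxdef
  have hx : 2/α - 2 = 4 * x := by rw [hxdef]; field_simp; ring
  have hx0 : 0 < x := by apply div_pos <;> linarith
  have hx4 : x ≤ 1/4 := by
    rw [hxdef, div_le_div_iff₀ (by linarith) (by norm_num)]
    linarith
  have hxne : x ≠ 0 := ne_of_gt hx0
  set s : ℝ := Real.sqrt (1 - 4 * x) with hsdef
  -- the three basic series
  have hv : Summable (fun j : ℕ => (catalan j : ℝ) * x ^ (j + 1)) :=
    cat_summable hx0.le hx4
  have hv1 : Summable (fun j : ℕ => (catalan (j + 1) : ℝ) * x ^ (j + 2)) := by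
    have := (summable_nat_add_iff 1).mpr hv
    simpa using this
  have hweq : ∀ j : ℕ, (catalan (j + 1) : ℝ) * x ^ (j + 1)
      = ((catalan (j + 1) : ℝ) * x ^ (j + 2)) * x⁻¹ := by
    intro j
    rw [pow_succ]
    field_simp
    ring
  have hw : Summable (fun j : ℕ => (catalan (j + 1) : ℝ) * x ^ (j + 1)) := by
    rw [summable_congr hweq]
    exact hv1.mul_right _
  have hvsum : (∑' j, (catalan j : ℝ) * x ^ (j + 1)) = (1 - s) / 2 :=
    cat_tsum_eq hx0.le hx4
  have hv1sum : (∑' j, (catalan (j + 1) : ℝ) * x ^ (j + 2)) = (1 - s) / 2 - x := by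
    have h := Summable.tsum_eq_zero_add hv
    rw [hvsum] at h
    simp only [Nat.cast_ofNat, pow_one, catalan_zero, Nat.cast_one, one_mul] at h
    linarith
  have hwsum : (∑' j, (catalan (j + 1) : ℝ) * x ^ (j + 1)) = ((1 - s) / 2 - x) * x⁻¹ := by
    rw [tsum_congr hweq, tsum_mul_right, hv1sum]
  -- decomposition of the target series
  have key : ∀ j : ℕ, ((j + 1 : ℕ) : ℝ) * qneg α (j + 1)
      = (3*α-2)/2 * ((Nat.centralBinom (j+1) : ℝ) * x ^ (j+1))
        + (α * ((catalan j : ℝ) * x ^ (j+1))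
          + (1-α) * ((catalan (j+1) : ℝ) * x ^ (j+1))) := by
    intro j
    rw [qneg_term' α x (ne_of_gt hα0) hx j]
    ring
  -- summability and value of the first piece, by cases
  have hfirst : Summable (fun j : ℕ => (3*α-2)/2 * ((Nat.centralBinom (j+1) : ℝ) * x ^ (j+1)))
      ∧ (∑' j : ℕ, (3*α-2)/2 * ((Nat.centralBinom (j+1) : ℝ) * x ^ (j+1)))
        = (3*α-2)/2 * (s⁻¹ - 1) := by
    rcases eq_or_lt_of_le h23 with heq | hlt
    · have hz : (3*α-2)/2 = 0 := by rw [← heq]; norm_num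
      constructor
      · simpa [hz] using summable_zero
      · simp [hz]
    · have hx4' : x < 1/4 := by
        rw [hxdef, div_lt_div_iff₀ (by linarith) (by norm_num)]
        linarith
      have hT := cb_summable hx0.le hx4'
      have hTsum := cb_tsum_eq hx0.le hx4'
      have htail : Summable (fun n : ℕ => (Nat.centralBinom (n+1) : ℝ) * x ^ (n+1)) := by
        have := (summable_nat_add_iff 1).mpr hT
        simpa using this
      have htailsum : (∑' n, (Nat.centralBinom (n+1) : ℝ) * x ^ (n+1)) = s⁻¹ - 1 := by
        have h := Summable.tsum_eq_zero_add hT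
        rw [hTsum] at h
        simp only [Nat.centralBinom_zero, Nat.cast_one, pow_zero, one_mul, mul_one] at h
        rw [hsdef, ← one_div]
        linarith
      exact ⟨htail.mul_left _, by rw [tsum_mul_left, htailsum]⟩
  obtain ⟨hU, hUsum⟩ := hfirst
  have hsum2 : Summable (fun j : ℕ => α * ((catalan j : ℝ) * x ^ (j+1))
      + (1-α) * ((catalan (j+1) : ℝ) * x ^ (j+1))) :=
    (hv.mul_left α).add (hw.mul_left (1-α))
  have htot : Summable (fun i : ℕ => ((i + 1 : ℕ) : ℝ) * qneg α (i + 1)) := by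
    rw [summable_congr key]
    exact hU.add hsum2
  have hSval : (∑' i : ℕ, ((i + 1 : ℕ) : ℝ) * qneg α (i + 1))
      = (3*α-2)/2 * (s⁻¹ - 1) + (α * ((1 - s) / 2) + (1-α) * (((1 - s) / 2 - x) * x⁻¹)) := by
    rw [tsum_congr key, Summable.tsum_add hU hsum2, hUsum,
      Summable.tsum_add (hv.mul_left α) (hw.mul_left (1-α)), tsum_mul_left, tsum_mul_left,
      hvsum, hwsum]
  refine ⟨htot, ?_, ?_, ?_⟩
  · rw [hSval]
    rcases eq_or_lt_of_le h23 with heq | hlt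
    · have hxv : x = 1/4 := by rw [hxdef, ← heq]; norm_num
      have hsv : s = 0 := by rw [hsdef, hxv]; norm_num
      rw [← heq, hsv, hxv]
      norm_num
    · have h14 : 1 - 4 * x = (3*α-2)/α := by rw [hxdef]; field_simp; ring
      have h14pos : 0 < 1 - 4 * x := by
        rw [h14]; apply div_pos <;> linarith
      have hspos : 0 < s := Real.sqrt_pos.mpr h14pos
      have hs2 : α * s ^ 2 = 3*α - 2 := by
        rw [hsdef, Real.sq_sqrt h14pos.le, h14]
        field_simp
      have hg : Real.sqrt (α * (3 * α - 2)) = α * s := by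
        rw [hsdef, h14, show α * (3*α-2) = α^2 * ((3*α-2)/α) from by field_simp,
          Real.sqrt_mul (sq_nonneg α), Real.sqrt_sq hα0.le]
      rw [hg, hxdef]
      have h1α : (1:ℝ) - α ≠ 0 := by linarith
      field_simp
      linear_combination hs2
  · rw [Real.sqrt_lt' hα0]
    nlinarith
  · rintro ⟨ha, hb⟩
    exact Real.sqrt_pos.mpr (by nlinarith)
end

section
/- For every α ∈ (2/3, 1) there exists λ > 0 such that ∑_{i=1}^∞ e^{λ·i} · q₋ᵢ(α) < ∞; that is, the step distribution q of the peeling process has exponential tails in the hyperbolic regime. -/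
lemma choose_le_two_pow' (n k : ℕ) : n.choose k ≤ 2 ^ n := by
  rcases le_or_gt k n with h | h
  · calc n.choose k ≤ ∑ m ∈ Finset.range (n + 1), n.choose m := by
          exact Finset.single_le_sum (fun i _ => Nat.zero_le _)
            (Finset.mem_range.mpr (Nat.lt_succ_of_le h))
      _ = 2 ^ n := Nat.sum_range_choose n
  · rw [Nat.choose_eq_zero_of_lt h]; positivity

lemma factorial_bound (i : ℕ) :
    (Nat.factorial (2 * i) : ℝ) / ((Nat.factorial i : ℝ) * (Nat.factorial (i + 2) : ℝ))
      ≤ 4 ^ i := by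
  have h1 : Nat.factorial (2 * i) ≤ 4 ^ i * (Nat.factorial i * Nat.factorial (i + 2)) := by
    have h2 : (2 * i).choose i * Nat.factorial i * Nat.factorial i =
        Nat.factorial (2 * i) := by
      have := Nat.choose_mul_factorial_mul_factorial (show i ≤ 2 * i by omega)
      simpa [show 2 * i - i = i by omega] using this
    have h4 : (2 * i).choose i ≤ 4 ^ i := by
      calc (2 * i).choose i ≤ 2 ^ (2 * i) := choose_le_two_pow' _ _
        _ = 4 ^ i := by rw [pow_mul]; norm_num
    have h5 : Nat.factorial i ≤ Nat.factorial (i + 2) :=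
      Nat.factorial_le (by omega)
    calc Nat.factorial (2 * i) = (2 * i).choose i * (Nat.factorial i * Nat.factorial i) := by
          rw [← h2]; ring
      _ ≤ 4 ^ i * (Nat.factorial i * Nat.factorial (i + 2)) := by
          exact Nat.mul_le_mul h4 (Nat.mul_le_mul_left _ h5)
  have hpos : (0 : ℝ) < (Nat.factorial i : ℝ) * (Nat.factorial (i + 2) : ℝ) := by
    positivity
  rw [div_le_iff₀ hpos]
  exact_mod_cast h1

/-- In the hyperbolic regime `α ∈ (2/3, 1)` the step distribution of the peeling
process has exponential tails: there is `λ > 0` with `∑_{i≥1} e^{λ i} q₋ᵢ(α) < ∞`. -/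
theorem qneg_exponential_tails (α : ℝ) (hα : α ∈ Set.Ioo (2/3 : ℝ) 1) :
    ∃ l : ℝ, 0 < l ∧
      Summable (fun i : ℕ => Real.exp (l * ((i + 1 : ℕ) : ℝ)) * qneg α (i + 1)) := by
  obtain ⟨hα1, hα2⟩ := hα
  have hαpos : (0 : ℝ) < α := by linarith
  set r : ℝ := 2 / α - 2 with hr
  have hreq : r = (2 - 2 * α) / α := by rw [hr]; field_simp
  have hr0 : 0 < r := by
    rw [hreq]; apply div_pos (by linarith) hαpos
  have hr1 : r < 1 := by
    rw [hreq, div_lt_one hαpos]; linarith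
  set s : ℝ := Real.sqrt r with hs
  have hs0 : 0 < s := Real.sqrt_pos.mpr hr0
  have hs1 : s < 1 := by
    rw [hs, show (1 : ℝ) = Real.sqrt 1 by simp]
    exact Real.sqrt_lt_sqrt hr0.le hr1
  have hss : s * s = r := Real.mul_self_sqrt hr0.le
  refine ⟨Real.log s⁻¹, Real.log_pos (by rw [one_lt_inv_iff₀]; exact ⟨hs0, hs1⟩), ?_⟩
  have hexp : ∀ n : ℕ, Real.exp (Real.log s⁻¹ * n) = s⁻¹ ^ n := by
    intro n
    rw [mul_comm, Real.exp_nat_mul, Real.exp_log (by positivity)]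
  -- dominating summable series
  have hsum : Summable (fun i : ℕ => ((i : ℝ) + 2) * s ^ (i + 1)) := by
    have h1 : Summable (fun i : ℕ => (i : ℝ) * s ^ i) := by
      simpa using summable_pow_mul_geometric_of_norm_lt_one 1
        (r := s) (by rw [Real.norm_eq_abs, abs_of_pos hs0]; exact hs1)
    have h2 : Summable (fun i : ℕ => (2 : ℝ) * s ^ i) :=
      (summable_geometric_of_lt_one hs0.le hs1).mul_left 2
    have h3 : Summable (fun i : ℕ => ((i : ℝ) + 2) * s ^ i) := by
      have := h1.add h2
      convert this using 2 with i
      ring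
    have := h3.mul_left s
    apply Summable.of_nonneg_of_le (fun i => by positivity)
      (fun i => le_of_eq (by ring)) this
  apply Summable.of_nonneg_of_le _ _ hsum
  · intro i
    have h1 : 0 ≤ qneg α (i + 1) := by
      unfold qneg
      have : (0:ℝ) ≤ (3 * α - 2) * (↑(i+1) : ℝ) + 1 := by
        have : (0:ℝ) ≤ (↑(i+1) : ℝ) := by positivity
        nlinarith
      positivity
    positivity
  · intro i
    rw [hexp]
    unfold qneg
    have he1 : 2 * (i + 1) - 2 = 2 * i := by omega
    have he2 : i + 1 - 1 = i := by omega
    rw [he1, he2]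
    have hfb := factorial_bound i
    have hfnn : (0:ℝ) ≤ (Nat.factorial (2 * i) : ℝ) /
        ((Nat.factorial i : ℝ) * (Nat.factorial (i + 2) : ℝ)) := by positivity
    -- bound the prefactor
    have hpre : 2 / (4:ℝ) ^ (i + 1) * ((Nat.factorial (2 * i) : ℝ) /
        ((Nat.factorial i : ℝ) * (Nat.factorial (i + 2) : ℝ))) ≤ 1 / 2 := by
      have h4 : (0:ℝ) < 4 ^ (i + 1) := by positivity
      calc 2 / (4:ℝ) ^ (i + 1) * ((Nat.factorial (2 * i) : ℝ) /
            ((Nat.factorial i : ℝ) * (Nat.factorial (i + 2) : ℝ)))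
          ≤ 2 / (4:ℝ) ^ (i + 1) * 4 ^ i := by
            exact mul_le_mul_of_nonneg_left hfb (by positivity)
        _ = 1 / 2 := by rw [pow_succ]; field_simp; ring
    -- bound the linear factor
    have hlin : (3 * α - 2) * (↑(i + 1) : ℝ) + 1 ≤ (i : ℝ) + 2 := by
      have hc : (↑(i + 1) : ℝ) = (i : ℝ) + 1 := by push_cast; ring
      rw [hc]
      have hn : (0:ℝ) ≤ (i : ℝ) + 1 := by positivity
      nlinarith
    have hlin0 : (0:ℝ) ≤ (3 * α - 2) * (↑(i + 1) : ℝ) + 1 := by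
      have : (0:ℝ) ≤ (↑(i + 1) : ℝ) := by positivity
      nlinarith
    have key : 2 / (4:ℝ) ^ (i + 1) * ((Nat.factorial (2 * i) : ℝ) /
        ((Nat.factorial i : ℝ) * (Nat.factorial (i + 2) : ℝ))) * r ^ (i + 1) *
        ((3 * α - 2) * (↑(i + 1) : ℝ) + 1) ≤ r ^ (i + 1) * ((i : ℝ) + 2) := by
      have hrp : (0:ℝ) ≤ r ^ (i + 1) := by positivity
      calc 2 / (4:ℝ) ^ (i + 1) * ((Nat.factorial (2 * i) : ℝ) /
            ((Nat.factorial i : ℝ) * (Nat.factorial (i + 2) : ℝ))) * r ^ (i + 1) *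
            ((3 * α - 2) * (↑(i + 1) : ℝ) + 1)
          ≤ (1/2) * r ^ (i + 1) * ((i : ℝ) + 2) := by
            apply mul_le_mul
            · exact mul_le_mul_of_nonneg_right hpre hrp
            · exact hlin
            · exact hlin0
            · positivity
        _ ≤ r ^ (i + 1) * ((i : ℝ) + 2) := by nlinarith
    calc s⁻¹ ^ (i + 1) *
          (2 / (4:ℝ) ^ (i + 1) * ((Nat.factorial (2 * i) : ℝ) /
            ((Nat.factorial i : ℝ) * (Nat.factorial (i + 2) : ℝ))) * r ^ (i + 1) *
            ((3 * α - 2) * (↑(i + 1) : ℝ) + 1))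
        ≤ s⁻¹ ^ (i + 1) * (r ^ (i + 1) * ((i : ℝ) + 2)) := by
          exact mul_le_mul_of_nonneg_left key (by positivity)
      _ = ((i : ℝ) + 2) * s ^ (i + 1) := by
          have : s⁻¹ ^ (i + 1) * r ^ (i + 1) = s ^ (i + 1) := by
            rw [← hss, ← mul_pow]
            congr 1
            field_simp
          rw [show s⁻¹ ^ (i + 1) * (r ^ (i + 1) * ((i : ℝ) + 2)) =
            (s⁻¹ ^ (i + 1) * r ^ (i + 1)) * ((i : ℝ) + 2) by ring, this]
          ring
end

section
/- For every α ∈ [2/3, 1) there exists a unique real sequence (c_p)_{p≥0} such that c_0 = c_1 = 0, c_3 = α^{−3}, and c_p = α·c_{p+1} + ∑_{i=1}^{p−2} q₋ᵢ(α)·c_{p−i} for every p ≥ 2. Moreover this sequence satisfies c_2 = α·c_3 and is strictly increasing on {2, 3, 4, …}; in particular c_p > 0 for every p ≥ 2. -/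
/-- The defining conditions of the rescaled constants `c_p = β^p C_p^{(κ)}`:
`c₀ = c₁ = 0`, `c₃ = α⁻³`, and the harmonicity recursion
`c_p = α c_{p+1} + ∑_{i=1}^{p−2} q₋ᵢ(α) c_{p−i}` for every `p ≥ 2`. -/
def IsHarmonicSeq (α : ℝ) (c : ℕ → ℝ) : Prop :=
  c 0 = 0 ∧ c 1 = 0 ∧ c 3 = α⁻¹ ^ 3 ∧
    ∀ p : ℕ, 2 ≤ p →
      c p = α * c (p + 1) + ∑ i ∈ Finset.Icc 1 (p - 2), qneg α i * c (p - i)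

lemma qneg_step {α : ℝ} (hα : α ∈ Set.Ico (2/3 : ℝ) 1) (N : ℕ) :
    qneg α (N + 1) =
      (1 - α) * (catalan N : ℝ) * ((1 - α) / (2 * α)) ^ N -
        (1 - α) * (catalan (N + 1) : ℝ) * ((1 - α) / (2 * α)) ^ (N + 1) := by
  obtain ⟨h1, h2⟩ := hα
  have hα0 : (0:ℝ) < α := by linarith
  have hα0' : α ≠ 0 := ne_of_gt hα0
  -- nat identities
  have hcat : ((N:ℝ) + 1) * (catalan N : ℝ) = (N.centralBinom : ℝ) := by
    exact_mod_cast congrArg (Nat.cast : ℕ → ℝ) (succ_mul_catalan_eq_centralBinom N)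
  have hcat1 : ((N:ℝ) + 2) * (catalan (N+1) : ℝ) = ((N+1).centralBinom : ℝ) := by
    have := succ_mul_catalan_eq_centralBinom (N+1)
    exact_mod_cast congrArg (Nat.cast : ℕ → ℝ) this
  have hcb1 : ((N:ℝ) + 1) * ((N+1).centralBinom : ℝ) = 2 * (2 * N + 1) * (N.centralBinom : ℝ) := by
    exact_mod_cast congrArg (Nat.cast : ℕ → ℝ) (Nat.succ_mul_centralBinom_succ N)
  have hN1 : ((N:ℝ) + 1) ≠ 0 := by positivity
  have hN2 : ((N:ℝ) + 2) ≠ 0 := by positivity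
  have hcb : ((2 * N).factorial : ℝ) = ((N:ℝ)+1) * (catalan N : ℝ) * N.factorial * N.factorial := by
    have h := Nat.choose_mul_factorial_mul_factorial (show N ≤ 2 * N by omega)
    have h2N : 2 * N - N = N := by omega
    rw [h2N] at h
    rw [hcat, Nat.centralBinom]
    exact_mod_cast h.symm
  have hcat2 : (catalan (N+1) : ℝ) = 2 * (2*(N:ℝ)+1) * (catalan N : ℝ) / ((N:ℝ)+2) := by
    rw [eq_div_iff hN2]
    have : ((N:ℝ)+1) * (((N:ℝ)+2) * (catalan (N+1) : ℝ)) = ((N:ℝ)+1) * (2 * (2*(N:ℝ)+1) * (catalan N : ℝ)) := by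
      rw [hcat1, hcb1, ← hcat]; ring
    have := mul_left_cancel₀ hN1 this
    linarith [this]
  have hidx1 : 2 * (N + 1) - 2 = 2 * N := by omega
  have hidx2 : N + 1 - 1 = N := by omega
  have hfac2 : ((N + 1 + 1).factorial : ℝ) = ((N:ℝ)+2) * ((N:ℝ)+1) * N.factorial := by
    rw [Nat.factorial_succ, Nat.factorial_succ]; push_cast; ring
  have hNfac : (N.factorial : ℝ) ≠ 0 := by positivity
  have hX : 2 / α - 2 = 2 * ((1 - α) / α) := by field_simp
  rw [qneg, hidx1, hidx2, hcb, hfac2, hcat2, hX]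
  rw [mul_pow, div_pow, div_pow, div_pow]
  rw [show (4:ℝ) ^ (N+1) = 2^(N+1) * 2^(N+1) by rw [← mul_pow]; norm_num]
  have h2α : ((2:ℝ) * α) ^ N ≠ 0 := by positivity
  have h2α1 : ((2:ℝ) * α) ^ (N+1) ≠ 0 := by positivity
  have hαN : (α:ℝ) ^ (N+1) ≠ 0 := by positivity
  have h4 : (4:ℝ) ^ (N+1) ≠ 0 := by positivity
  push_cast
  field_simp
  ring

lemma qneg_pos {α : ℝ} (hα : α ∈ Set.Ico (2/3 : ℝ) 1) (i : ℕ) : 0 < qneg α i := by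
  obtain ⟨h1, h2⟩ := hα
  have hα0 : (0:ℝ) < α := by linarith
  have ht : (0:ℝ) < 2 / α - 2 := by
    rw [lt_sub_iff_add_lt, zero_add, lt_div_iff₀ hα0]; linarith
  have h3 : (0:ℝ) ≤ 3 * α - 2 := by linarith
  have h5 : (0:ℝ) < (3 * α - 2) * i + 1 := by positivity
  have h6 : (0:ℝ) < (Nat.factorial (2 * i - 2) : ℝ) := by positivity
  have h7 : (0:ℝ) < (Nat.factorial (i - 1) : ℝ) * (Nat.factorial (i + 1) : ℝ) := by positivity
  have h8 : (0:ℝ) < 2 / 4 ^ i := by positivity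
  apply mul_pos (mul_pos (mul_pos h8 (div_pos h6 h7)) (pow_pos ht i)) h5

lemma qneg_sum {α : ℝ} (hα : α ∈ Set.Ico (2/3 : ℝ) 1) (N : ℕ) :
    ∑ i ∈ Finset.Icc 1 N, qneg α i =
      (1 - α) - (1 - α) * (catalan N : ℝ) * ((1 - α) / (2 * α)) ^ N := by
  induction N with
  | zero => simp
  | succ n ih =>
      rw [Finset.sum_Icc_succ_top (by omega), ih, qneg_step hα n]
      ring

lemma qneg_sum_le {α : ℝ} (hα : α ∈ Set.Ico (2/3 : ℝ) 1) (N : ℕ) :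
    ∑ i ∈ Finset.Icc 1 N, qneg α i ≤ 1 - α := by
  rw [qneg_sum hα N]
  obtain ⟨h1, h2⟩ := hα
  have hα0 : (0:ℝ) < α := by linarith
  have ha1 : (0:ℝ) ≤ 1 - α := by linarith
  have : (0:ℝ) ≤ (1 - α) * (catalan N : ℝ) * ((1 - α) / (2 * α)) ^ N := by
    apply mul_nonneg (mul_nonneg ha1 (by positivity))
    apply pow_nonneg (div_nonneg ha1 (by linarith))
  linarith

/-- The unique harmonic sequence. -/
noncomputable def cseq (α : ℝ) : ℕ → ℝ
  | 0 => 0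
  | 1 => 0
  | 2 => α⁻¹ ^ 2
  | p + 3 =>
      (cseq α (p + 2) - ∑ i ∈ Finset.Icc 1 p, qneg α i * cseq α (p + 2 - i)) / α

lemma cseq_succ (α : ℝ) (p : ℕ) : cseq α (p + 3) =
    (cseq α (p + 2) - ∑ i ∈ Finset.Icc 1 p, qneg α i * cseq α (p + 2 - i)) / α := by
  rw [cseq]

lemma cseq_isHarmonic {α : ℝ} (hα0 : α ≠ 0) : IsHarmonicSeq α (cseq α) := by
  refine ⟨by simp [cseq], by simp [cseq], ?_, ?_⟩
  · rw [show (3:ℕ) = 0 + 3 from rfl, cseq_succ]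
    rw [show Finset.Icc 1 0 = (∅ : Finset ℕ) from rfl]
    simp [cseq]
    field_simp
  · intro p hp
    obtain ⟨q, rfl⟩ : ∃ q, p = q + 2 := ⟨p - 2, by omega⟩
    rw [show q + 2 + 1 = q + 3 from rfl, cseq_succ, mul_div_cancel₀ _ hα0]
    have : q + 2 - 2 = q := by omega
    rw [this]
    ring

lemma harmonic_unique {α : ℝ} (hα0 : α ≠ 0) {c c' : ℕ → ℝ}
    (hc : IsHarmonicSeq α c) (hc' : IsHarmonicSeq α c') : c = c' := by
  obtain ⟨h0, h1, h3, hrec⟩ := hc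
  obtain ⟨h0', h1', h3', hrec'⟩ := hc'
  have h2 : c 2 = c' 2 := by
    have e1 := hrec 2 (by norm_num)
    have e2 := hrec' 2 (by norm_num)
    simp only [show (2:ℕ) - 2 = 0 from rfl, Finset.Icc_self] at e1 e2
    rw [show Finset.Icc 1 0 = (∅ : Finset ℕ) from rfl] at e1 e2
    simp at e1 e2
    rw [e1, e2, h3, h3']
  funext n
  induction n using Nat.strong_induction_on with
  | _ n ih =>
    match n with
    | 0 => exact h0.trans h0'.symm
    | 1 => exact h1.trans h1'.symm
    | 2 => exact h2
    | 3 => exact h3.trans h3'.symm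
    | (m + 4) =>
      have e1 := hrec (m + 3) (by omega)
      have e2 := hrec' (m + 3) (by omega)
      have hsub : m + 3 - 2 = m + 1 := by omega
      rw [hsub] at e1 e2
      have hsum : ∑ i ∈ Finset.Icc 1 (m+1), qneg α i * c (m + 3 - i) =
          ∑ i ∈ Finset.Icc 1 (m+1), qneg α i * c' (m + 3 - i) := by
        apply Finset.sum_congr rfl
        intro i hi
        rw [Finset.mem_Icc] at hi
        rw [ih (m + 3 - i) (by omega)]
      have hc3 : c (m + 3) = c' (m + 3) := ih (m + 3) (by omega)
      rw [hc3, hsum] at e1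
      have : α * c (m + 3 + 1) = α * c' (m + 3 + 1) := by linarith
      exact mul_left_cancel₀ hα0 this

lemma harmonic_c2 {α : ℝ} {c : ℕ → ℝ} (hc : IsHarmonicSeq α c) : c 2 = α * c 3 := by
  obtain ⟨h0, h1, h3, hrec⟩ := hc
  have e := hrec 2 (by norm_num)
  rw [show (2:ℕ) - 2 = 0 from rfl, show Finset.Icc 1 0 = (∅ : Finset ℕ) from rfl] at e
  simpa using e

lemma harmonic_pos_mono {α : ℝ} (hα : α ∈ Set.Ico (2/3 : ℝ) 1) {c : ℕ → ℝ}
    (hc : IsHarmonicSeq α c) :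
    ∀ n : ℕ, 0 < c (n + 2) ∧ ∀ j ≤ n, c (j + 2) < c (n + 3) := by
  obtain ⟨hl, hr⟩ := hα
  have hα0 : (0:ℝ) < α := by linarith
  obtain ⟨h0, h1, h3, hrec⟩ := hc
  have hc3 : (0:ℝ) < c 3 := by rw [h3]; positivity
  have hc2 : c 2 = α * c 3 := harmonic_c2 ⟨h0, h1, h3, hrec⟩
  intro n
  induction n using Nat.strong_induction_on with
  | _ n ih =>
    match n with
    | 0 =>
      constructor
      · rw [hc2]; positivity
      · intro j hj
        interval_cases j
        rw [hc2]
        nlinarith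
    | (n + 1) =>
      obtain ⟨hp, hm⟩ := ih n (by omega)
      have hcn3 : 0 < c (n + 3) := lt_trans hp (hm n le_rfl)
      have step : c (n + 3) < c (n + 4) := by
        have e := hrec (n + 3) (by omega)
        rw [show n + 3 - 2 = n + 1 from by omega] at e
        have hsum : ∑ i ∈ Finset.Icc 1 (n + 1), qneg α i * c (n + 3 - i) <
            ∑ i ∈ Finset.Icc 1 (n + 1), qneg α i * c (n + 3) := by
          apply Finset.sum_lt_sum_of_nonempty ⟨1, by simp⟩
          intro i hi
          rw [Finset.mem_Icc] at hi
          have hj : n + 3 - i = (n + 1 - i) + 2 := by omega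
          rw [hj]
          exact mul_lt_mul_of_pos_left (hm (n + 1 - i) (by omega)) (qneg_pos ⟨hl, hr⟩ i)
        rw [← Finset.sum_mul] at hsum
        have hsum2 : (∑ i ∈ Finset.Icc 1 (n + 1), qneg α i) * c (n + 3) ≤
            (1 - α) * c (n + 3) :=
          mul_le_mul_of_nonneg_right (qneg_sum_le ⟨hl, hr⟩ (n + 1)) (le_of_lt hcn3)
        have : α * c (n + 3) < α * c (n + 3 + 1) := by nlinarith
        exact lt_of_mul_lt_mul_left this (le_of_lt hα0)
      refine ⟨hcn3, fun j hj => ?_⟩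
      rcases Nat.lt_or_ge j (n + 1) with h | h
      · exact lt_trans (hm j (by omega)) step
      · have : j = n + 1 := by omega
        rw [this]; exact step


/-- For `α ∈ [2/3, 1)` there is a unique sequence `(c_p)` with `c₀ = c₁ = 0`,
`c₃ = α⁻³` satisfying the harmonicity recursion; moreover it satisfies
`c₂ = α c₃`, is strictly increasing on `{2, 3, 4, …}`, and `c_p > 0` for `p ≥ 2`. -/
theorem harmonic_sequence_exists_unique (α : ℝ) (hα : α ∈ Set.Ico (2/3 : ℝ) 1) :
    (∃! c : ℕ → ℝ, IsHarmonicSeq α c) ∧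
    ∀ c : ℕ → ℝ, IsHarmonicSeq α c →
      c 2 = α * c 3 ∧ StrictMonoOn c (Set.Ici 2) ∧ ∀ p : ℕ, 2 ≤ p → 0 < c p := by
  have hα0 : α ≠ 0 := by
    obtain ⟨hl, hr⟩ := hα
    intro h; rw [h] at hl; norm_num at hl
  constructor
  · exact ⟨cseq α, cseq_isHarmonic hα0,
      fun c hc => harmonic_unique hα0 hc (cseq_isHarmonic hα0)⟩
  · intro c hc
    have H := harmonic_pos_mono hα hc
    have key : ∀ n : ℕ, c (n + 2) < c (n + 3) := fun n => (H n).2 n le_rfl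
    have mono : StrictMono fun n => c (n + 2) := strictMono_nat_of_lt_succ key
    refine ⟨harmonic_c2 hc, ?_, ?_⟩
    · intro a ha b hb hab
      have ha2 : a - 2 + 2 = a := by simp at ha; omega
      have hb2 : b - 2 + 2 = b := by simp at hb; omega
      have := mono (show a - 2 < b - 2 by simp at ha hb; omega)
      simpa only [ha2, hb2] using this
    · intro p hp
      have := (H (p - 2)).1
      rwa [show p - 2 + 2 = p by omega] at this
end

section
/- For every α ∈ (2/3, 1), the sequence (c_p)_{p≥2} converges as p → ∞, and its limit equals 1/(α·√(α(3α−2))) = (α·δ(α))^{−1}. -/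
open Finset Filter

lemma cb4 (m : ℕ) : Nat.centralBinom (m+1) + 2 * catalan m = 4 * Nat.centralBinom m := by
  have h1 := Nat.succ_mul_centralBinom_succ m
  have h2 := succ_mul_catalan_eq_centralBinom m
  have key : (m+1) * (Nat.centralBinom (m+1) + 2 * catalan m) = (m+1) * (4 * Nat.centralBinom m) := by
    calc (m+1) * (Nat.centralBinom (m+1) + 2 * catalan m)
        = (m+1) * Nat.centralBinom (m+1) + 2 * ((m+1) * catalan m) := by ring
      _ = 2 * (2*m+1) * Nat.centralBinom m + 2 * Nat.centralBinom m := by rw [h1, h2]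
      _ = (m+1) * (4 * Nat.centralBinom m) := by ring
  exact Nat.eq_of_mul_eq_mul_left (Nat.succ_pos m) key

lemma cbR (m : ℕ) : (Nat.centralBinom (m+1) : ℝ) = 4 * Nat.centralBinom m - 2 * catalan m := by
  have := cb4 m
  have h : (Nat.centralBinom (m+1) : ℝ) + 2 * catalan m = 4 * Nat.centralBinom m := by
    exact_mod_cast congrArg (Nat.cast : ℕ → ℝ) this
  linarith

lemma segnerR (n : ℕ) : (catalan (n+1) : ℝ) = ∑ j ∈ range (n+1), (catalan j : ℝ) * catalan (n - j) := by
  rw [catalan_succ n]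
  push_cast
  rw [Fin.sum_univ_eq_sum_range (fun i => (catalan i : ℝ) * catalan (n - i))]

lemma keyK (n : ℕ) : (Nat.centralBinom (n+1) : ℝ)
    = 2 * ∑ j ∈ range (n+1), (catalan j : ℝ) * Nat.centralBinom (n - j) := by
  induction n with
  | zero => simp [Nat.centralBinom]
  | succ n ih =>
    rw [sum_range_succ]
    have hstep : ∀ j ∈ range (n+1), (catalan j : ℝ) * Nat.centralBinom (n+1-j)
        = 4 * ((catalan j : ℝ) * Nat.centralBinom (n-j)) - 2 * ((catalan j : ℝ) * catalan (n-j)) := by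
      intro j hj
      have hj' : j ≤ n := by simpa [Nat.lt_succ_iff] using hj
      have : n + 1 - j = (n - j) + 1 := by omega
      rw [this, cbR]
      ring
    rw [sum_congr rfl hstep, sum_sub_distrib]
    rw [← mul_sum, ← mul_sum, ← segnerR n]
    have hc := cbR (n+1)
    simp only [Nat.sub_self, Nat.centralBinom_zero]
    rw [hc, ih]
    push_cast
    ring

lemma keyV (n : ℕ) : ∑ j ∈ range (n+1), (Nat.centralBinom j : ℝ) * Nat.centralBinom (n - j) = 4 ^ n := by
  induction n with
  | zero => simp [Nat.centralBinom]
  | succ n ih =>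
    rw [sum_range_succ' (fun j => (Nat.centralBinom j : ℝ) * Nat.centralBinom (n + 1 - j)) (n+1)]
    have hstep : ∀ j ∈ range (n+1), (Nat.centralBinom (j+1) : ℝ) * Nat.centralBinom (n + 1 - (j+1))
        = 4 * ((Nat.centralBinom j : ℝ) * Nat.centralBinom (n-j)) - 2 * ((catalan j : ℝ) * Nat.centralBinom (n-j)) := by
      intro j hj
      have : n + 1 - (j+1) = n - j := by omega
      rw [this, cbR]
      ring
    rw [sum_congr rfl hstep, sum_sub_distrib, ← mul_sum, ← mul_sum, ih]
    have hK := keyK n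
    simp only [Nat.sub_zero, Nat.centralBinom_zero]
    rw [show (∑ j ∈ range (n+1), (catalan j : ℝ) * Nat.centralBinom (n-j)) = (Nat.centralBinom (n+1) : ℝ)/2 by
      rw [hK]; ring]
    ring



lemma factA (m : ℕ) : catalan m * ((m+1).factorial * m.factorial) = (2*m).factorial := by
  have h1 := succ_mul_catalan_eq_centralBinom m
  have h2 : Nat.centralBinom m * m.factorial * m.factorial = (2*m).factorial := by
    have := Nat.choose_mul_factorial_mul_factorial (show m ≤ 2*m by omega)
    simpa [Nat.centralBinom, show 2*m - m = m by omega] using this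
  calc catalan m * ((m+1).factorial * m.factorial)
      = ((m+1) * catalan m) * m.factorial * m.factorial := by
        rw [Nat.factorial_succ]; ring
    _ = Nat.centralBinom m * m.factorial * m.factorial := by rw [h1]
    _ = (2*m).factorial := h2

lemma factB (m : ℕ) : catalan (m+1) * (m.factorial * (m+2).factorial) = 2 * (2*m+1).factorial := by
  have hA' : catalan (m+1) * ((m+2).factorial * (m+1).factorial) = (2*m+2).factorial := by
    simpa [show m+1+1 = m+2 by omega, show 2*(m+1) = 2*m+2 by ring] using factA (m+1)
  have key : (catalan (m+1) * (m.factorial * (m+2).factorial)) * (m+1).factorial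
      = (2 * (2*m+1).factorial) * (m+1).factorial := by
    calc catalan (m+1) * (m.factorial * (m+2).factorial) * (m+1).factorial
        = catalan (m+1) * ((m+2).factorial * (m+1).factorial) * m.factorial := by ring
      _ = (2*m+2).factorial * m.factorial := by rw [hA']
      _ = ((2*m+1)+1) * (2*m+1).factorial * m.factorial := by
          rw [show 2*m+2 = (2*m+1)+1 by ring, Nat.factorial_succ]
      _ = 2 * (2*m+1).factorial * ((m+1) * m.factorial) := by ring
      _ = (2 * (2*m+1).factorial) * (m+1).factorial := by rw [← Nat.factorial_succ]
  exact Nat.eq_of_mul_eq_mul_right (Nat.factorial_pos (m+1)) key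





lemma qneg_eq (α : ℝ) (hα0 : 0 < α) (m : ℕ) :
    qneg α (m+1) = ((1-α)/(2*α))^(m+1) * (2*α*(catalan m) + (α-1)*(catalan (m+1))) := by
  have hαne : α ≠ 0 := ne_of_gt hα0
  set x : ℝ := (1-α)/(2*α) with hxdef
  have h42 : 2/α - 2 = 4*x := by rw [hxdef]; field_simp; ring
  have hA : ((2*m).factorial : ℝ) = (catalan m) * ((m+1).factorial * m.factorial) := by
    exact_mod_cast (factA m).symm
  have hB : ((catalan (m+1)) : ℝ) * (m.factorial * (m+2).factorial) = 2 * (2*m+1).factorial := by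
    exact_mod_cast factB m
  have h3 : (((2*m+1).factorial) : ℝ) = (2*(m:ℝ)+1) * (2*m).factorial := by
    rw [show 2*m+1 = (2*m)+1 from rfl, Nat.factorial_succ]; push_cast; ring
  have h4 : (((m+2).factorial) : ℝ) = ((m:ℝ)+2) * (m+1).factorial := by
    rw [show m+2 = (m+1)+1 from rfl, Nat.factorial_succ]; push_cast; ring
  have hmain : 2 * (((2*m).factorial:ℝ)) * ((3*α-2)*((m:ℝ)+1)+1)
      = (2*α*(catalan m) + (α-1)*(catalan (m+1))) * ((m.factorial : ℝ) * (m+2).factorial) := by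
    linear_combination (2*α*((m:ℝ)+2)) * hA - (α-1) * hB - 2*(α-1) * h3
      - 2*α*((catalan m : ℝ))*(m.factorial:ℝ) * h4
  have e1 : 2*(m+1)-2 = 2*m := by omega
  have e2 : (m+1)-1 = m := by omega
  have e3 : (m+1)+1 = m+2 := by omega
  rw [qneg, e1, e2, e3, h42, mul_pow]
  have hf1 : ((m.factorial : ℝ)) ≠ 0 := by exact_mod_cast (Nat.factorial_pos m).ne'
  have hf2 : (((m+2).factorial : ℝ)) ≠ 0 := by exact_mod_cast (Nat.factorial_pos (m+2)).ne'
  have h4p : (4:ℝ)^(m+1) ≠ 0 := by positivity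
  field_simp
  push_cast
  linear_combination (x^(m+1)) * hmain

lemma sum_shift (F : ℕ → ℝ) (n : ℕ) : ∑ i ∈ Icc 1 n, F i = ∑ j ∈ range n, F (j+1) := by
  induction n with
  | zero => simp
  | succ n ih => rw [sum_range_succ, ← ih, Finset.sum_Icc_succ_top (by omega : 1 ≤ n+1)]

lemma star (α : ℝ) (hα0 : 0 < α) (n : ℕ) (hn : 1 ≤ n) :
    (Nat.centralBinom n : ℝ) * ((1-α)/(2*α))^n
      = α * ((Nat.centralBinom (n+1) : ℝ) * ((1-α)/(2*α))^(n+1))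
        + ∑ i ∈ Icc 1 n, qneg α i * ((Nat.centralBinom (n-i) : ℝ) * ((1-α)/(2*α))^(n-i)) := by
  have hαne : α ≠ 0 := ne_of_gt hα0
  set x : ℝ := (1-α)/(2*α) with hxdef
  have h2ax : 2*α*x = 1 - α := by rw [hxdef]; field_simp
  rw [sum_shift (fun i => qneg α i * ((Nat.centralBinom (n-i) : ℝ) * x^(n-i))) n]
  have hterm : ∀ j ∈ range n, qneg α (j+1) * ((Nat.centralBinom (n-(j+1)) : ℝ) * x^(n-(j+1)))
      = x^n * (2*α*((catalan j : ℝ) * (Nat.centralBinom (n-1-j) : ℝ))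
          + (α-1)*((catalan (j+1) : ℝ) * (Nat.centralBinom (n-1-j) : ℝ))) := by
    intro j hj
    have hj' : j < n := mem_range.mp hj
    have hidx : n - (j+1) = n-1-j := by omega
    have hexp : (j+1) + (n-1-j) = n := by omega
    rw [qneg_eq α hα0 j, hidx, ← hxdef]
    calc x^(j+1) * (2*α*(catalan j) + (α-1)*(catalan (j+1)))
          * ((Nat.centralBinom (n-1-j) : ℝ) * x^(n-1-j))
        = (x^(j+1) * x^(n-1-j)) * ((2*α*(catalan j) + (α-1)*(catalan (j+1)))
            * (Nat.centralBinom (n-1-j) : ℝ)) := by ring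
      _ = x^n * ((2*α*(catalan j) + (α-1)*(catalan (j+1))) * (Nat.centralBinom (n-1-j) : ℝ)) := by
          rw [← pow_add, hexp]
      _ = x^n * (2*α*((catalan j : ℝ) * (Nat.centralBinom (n-1-j) : ℝ))
          + (α-1)*((catalan (j+1) : ℝ) * (Nat.centralBinom (n-1-j) : ℝ))) := by ring
  rw [sum_congr rfl hterm]
  have hS1 : ∑ j ∈ range n, (catalan j : ℝ) * (Nat.centralBinom (n-1-j) : ℝ)
      = (Nat.centralBinom n : ℝ) / 2 := by
    have := keyK (n-1)
    rw [show (n-1)+1 = n by omega] at this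
    rw [this]; ring
  have hS2 : ∑ j ∈ range n, (catalan (j+1) : ℝ) * (Nat.centralBinom (n-1-j) : ℝ)
      = (Nat.centralBinom (n+1) : ℝ) / 2 - (Nat.centralBinom n : ℝ) := by
    have hK := keyK n
    rw [sum_range_succ' (fun j => (catalan j : ℝ) * (Nat.centralBinom (n-j) : ℝ)) n] at hK
    simp only [Nat.sub_zero, catalan_zero, Nat.cast_one, one_mul] at hK
    have : ∀ j ∈ range n, (catalan (j+1) : ℝ) * (Nat.centralBinom (n-(j+1)) : ℝ)
        = (catalan (j+1) : ℝ) * (Nat.centralBinom (n-1-j) : ℝ) := by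
      intro j hj
      rw [show n-(j+1) = n-1-j by omega]
    rw [sum_congr rfl this] at hK
    linarith [hK]
  have hsum : ∑ j ∈ range n, (x^n * (2*α*((catalan j : ℝ) * (Nat.centralBinom (n-1-j) : ℝ))
      + (α-1)*((catalan (j+1) : ℝ) * (Nat.centralBinom (n-1-j) : ℝ))))
      = x^n * (2*α*(∑ j ∈ range n, (catalan j : ℝ) * (Nat.centralBinom (n-1-j) : ℝ))
        + (α-1)*(∑ j ∈ range n, (catalan (j+1) : ℝ) * (Nat.centralBinom (n-1-j) : ℝ))) := by
    rw [← mul_sum]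
    congr 1
    rw [mul_sum, mul_sum, ← sum_add_distrib]
  rw [hsum]
  rw [hS1, hS2]
  linear_combination (-(x^n) * (Nat.centralBinom (n+1) : ℝ) / 2) * h2ax



noncomputable def Gfun (α : ℝ) (p : ℕ) : ℝ :=
  ∑ k ∈ range (p-1), (Nat.centralBinom k : ℝ) * ((1-α)/(2*α))^k

lemma Gfun_succ (α : ℝ) (m : ℕ) (hm : 1 ≤ m) :
    Gfun α (m+1) = Gfun α m + (Nat.centralBinom (m-1) : ℝ) * ((1-α)/(2*α))^(m-1) := by
  unfold Gfun
  rw [show (m+1)-1 = (m-1)+1 by omega, sum_range_succ]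

lemma starSum (α : ℝ) (hα0 : 0 < α) : ∀ p : ℕ, 2 ≤ p →
    Gfun α p = α * Gfun α (p+1) + ∑ i ∈ Icc 1 (p-2), qneg α i * Gfun α (p-i) := by
  have hαne : α ≠ 0 := ne_of_gt hα0
  set x : ℝ := (1-α)/(2*α) with hxdef
  have h2ax : 2*α*x = 1 - α := by rw [hxdef]; field_simp
  intro p hp
  induction p, hp using Nat.le_induction with
  | base =>
    have hG2 : Gfun α 2 = 1 := by simp [Gfun]
    have hG3 : Gfun α 3 = 1 + 2*x := by
      simp [Gfun, sum_range_succ, show Nat.centralBinom 1 = 2 by decide, hxdef]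
    rw [hG2, hG3]
    simp only [show (2:ℕ)-2 = 0 from rfl, Icc_self]
    rw [show Icc 1 0 = (∅ : Finset ℕ) by decide]
    simp only [sum_empty, add_zero]
    linear_combination -h2ax
  | succ p hp ih =>
    have hstar := star α hα0 (p-1) (by omega)
    rw [show (p-1)+1 = p by omega] at hstar
    have hGp := Gfun_succ α p (by omega)
    have hGp1 := Gfun_succ α (p+1) (by omega)
    rw [show (p+1)-1 = p from rfl] at hGp1
    have hsplit : ∑ i ∈ Icc 1 ((p+1)-2), qneg α i * Gfun α ((p+1)-i)
        = (∑ i ∈ Icc 1 (p-2), qneg α i * Gfun α (p-i))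
          + ∑ i ∈ Icc 1 (p-1), qneg α i * ((Nat.centralBinom (p-1-i) : ℝ) * x^(p-1-i)) := by
      have h1 : ∀ i ∈ Icc 1 ((p+1)-2), qneg α i * Gfun α ((p+1)-i)
          = qneg α i * Gfun α (p-i) + qneg α i * ((Nat.centralBinom (p-1-i) : ℝ) * x^(p-1-i)) := by
        intro i hi
        obtain ⟨hi1, hi2⟩ := mem_Icc.mp hi
        have hpi : 1 ≤ p - i := by omega
        have : (p+1)-i = (p-i)+1 := by omega
        rw [this, Gfun_succ α (p-i) hpi, show (p-i)-1 = p-1-i by omega]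
        ring
      rw [sum_congr rfl h1, sum_add_distrib, show (p+1)-2 = p-1 by omega]
      have e1 : ∑ i ∈ Icc 1 (p-1), qneg α i * Gfun α (p-i)
          = ∑ i ∈ Icc 1 (p-2), qneg α i * Gfun α (p-i) := by
        rw [show p-1 = (p-2)+1 by omega, Finset.sum_Icc_succ_top (by omega : 1 ≤ (p-2)+1)]
        rw [show (p-2)+1 = p-1 by omega, show p-(p-1) = 1 by omega,
          show Gfun α 1 = 0 by simp [Gfun]]
        simp
      rw [e1]
    rw [hsplit, hGp, hGp1]
    rw [show (p+1)-2 = p-1 by omega] at *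
    linarith [hstar, ih]

/-- For `α ∈ (2/3, 1)`, the sequence `(c_p)` determined by `c₀ = c₁ = 0`, `c₃ = α⁻³`
and the harmonicity recursion `c_p = α c_{p+1} + ∑_{i=1}^{p−2} q₋ᵢ(α) c_{p−i}` (`p ≥ 2`)
converges as `p → ∞` to `1/(α·√(α(3α−2))) = (α δ(α))⁻¹`. -/
theorem harmonic_sequence_limit (α : ℝ) (hα : α ∈ Set.Ioo (2/3 : ℝ) 1) (c : ℕ → ℝ)
    (h0 : c 0 = 0) (h1 : c 1 = 0) (h3 : c 3 = α⁻¹ ^ 3)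
    (hrec : ∀ p : ℕ, 2 ≤ p →
      c p = α * c (p + 1) + ∑ i ∈ Finset.Icc 1 (p - 2), qneg α i * c (p - i)) :
    Filter.Tendsto c Filter.atTop
      (nhds (1 / (α * Real.sqrt (α * (3 * α - 2))))) := by
  obtain ⟨hα23, hα1⟩ := hα
  have hα0 : (0:ℝ) < α := by linarith
  have hαne : α ≠ 0 := ne_of_gt hα0
  set x : ℝ := (1-α)/(2*α) with hxdef
  have hx0 : 0 < x := by
    rw [hxdef]; apply div_pos <;> linarith
  have h4x : 4*x < 1 := by
    rw [hxdef, mul_div_assoc', div_lt_one (by linarith : (0:ℝ) < 2*α)]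
    linarith
  have h2ax : 2*α*x = 1-α := by rw [hxdef]; field_simp
  set f : ℕ → ℝ := fun k => (Nat.centralBinom k : ℝ) * x^k with hfdef
  have hfpos : ∀ k, 0 < f k := fun k =>
    mul_pos (by exact_mod_cast Nat.centralBinom_pos k) (pow_pos hx0 k)
  -- c equals the partial sums of f, scaled by α⁻²
  have ceq : ∀ p, c p = α⁻¹^2 * Gfun α p := by
    intro p
    induction p using Nat.strong_induction_on with
    | _ p IH =>
      match p, IH with
      | 0, _ => rw [h0]; simp [Gfun]
      | 1, _ => rw [h1]; simp [Gfun]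
      | 2, _ =>
        have hr := hrec 2 le_rfl
        simp only [show (2:ℕ)-2 = 0 from rfl] at hr
        rw [show Icc 1 0 = (∅ : Finset ℕ) by decide] at hr
        simp only [sum_empty, add_zero] at hr
        rw [hr, h3, show Gfun α 2 = 1 by simp [Gfun]]
        field_simp
      | 3, _ =>
        rw [h3, show Gfun α 3 = 1 + 2*x by
          simp [Gfun, sum_range_succ, show Nat.centralBinom 1 = 2 by decide, hxdef]]
        have hαinv : α⁻¹ = 1 + 2*x := by
          field_simp
          linear_combination -h2ax
        rw [show (α⁻¹:ℝ)^3 = α⁻¹^2 * α⁻¹ by ring, hαinv]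
      | (q+4), IH =>
        have hr := hrec (q+3) (by omega)
        have h3q : (q+3) - 2 = q+1 := by omega
        rw [h3q] at hr
        have hsc : ∑ i ∈ Icc 1 (q+1), qneg α i * c ((q+3)-i)
            = α⁻¹^2 * ∑ i ∈ Icc 1 (q+1), qneg α i * Gfun α ((q+3)-i) := by
          rw [mul_sum]
          refine sum_congr rfl fun i hi => ?_
          obtain ⟨h1i, h2i⟩ := mem_Icc.mp hi
          rw [IH ((q+3)-i) (by omega)]
          ring
        rw [hsc, IH (q+3) (by omega)] at hr
        have hSS := starSum α hα0 (q+3) (by omega)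
        rw [h3q] at hSS
        have key : α * c (q+3+1) = α * (α⁻¹^2 * Gfun α (q+3+1)) := by
          linear_combination α⁻¹^2 * hSS - hr
        exact mul_left_cancel₀ hαne key
  -- summability of f
  have hratio : ∀ k : ℕ, f (k+1) ≤ (4*x) * f k := by
    intro k
    have hcb : (Nat.centralBinom (k+1) : ℝ) ≤ 4 * Nat.centralBinom k := by
      rw [cbR k]
      have : (0:ℝ) ≤ (catalan k : ℝ) := by positivity
      linarith
    calc f (k+1) = (Nat.centralBinom (k+1):ℝ) * (x^k * x) := by
          simp only [hfdef]; rw [pow_succ]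
      _ ≤ (4 * Nat.centralBinom k) * (x^k * x) := by
          apply mul_le_mul_of_nonneg_right hcb
          positivity
      _ = (4*x) * f k := by simp only [hfdef]; ring
  have hsum : Summable f := by
    refine summable_of_ratio_norm_eventually_le h4x (Filter.Eventually.of_forall fun k => ?_)
    rw [Real.norm_of_nonneg (hfpos _).le, Real.norm_of_nonneg (hfpos _).le]
    exact hratio k
  have hnorm : Summable (fun k => ‖f k‖) := summable_norm_iff.mpr hsum
  set T := ∑' k, f k with hTdef
  -- Cauchy product: T² = 1/(1-4x)
  have hinner : ∀ n : ℕ, ∑ k ∈ range (n+1), f k * f (n-k) = (4*x)^n := by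
    intro n
    have hterm : ∀ k ∈ range (n+1), f k * f (n-k)
        = ((Nat.centralBinom k:ℝ) * Nat.centralBinom (n-k)) * x^n := by
      intro k hk
      have hk' : k ≤ n := by simpa [Nat.lt_succ_iff] using hk
      simp only [hfdef]
      calc (Nat.centralBinom k:ℝ) * x^k * ((Nat.centralBinom (n-k):ℝ) * x^(n-k))
          = ((Nat.centralBinom k:ℝ) * Nat.centralBinom (n-k)) * (x^k * x^(n-k)) := by ring
        _ = ((Nat.centralBinom k:ℝ) * Nat.centralBinom (n-k)) * x^n := by
            rw [← pow_add, show k + (n-k) = n by omega]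
    rw [sum_congr rfl hterm, ← sum_mul, keyV n, mul_pow]
  have hTT : T * T = (1 - 4*x)⁻¹ := by
    rw [hTdef, tsum_mul_tsum_eq_tsum_sum_range_of_summable_norm hnorm hnorm,
      tsum_congr hinner, tsum_geometric_of_lt_one (by positivity) h4x]
  have hT1 : (1:ℝ) ≤ T := by
    have hf0 : f 0 = 1 := by simp [hfdef]
    calc (1:ℝ) = f 0 := hf0.symm
      _ ≤ T := hsum.le_tsum 0 (fun j _ => (hfpos j).le)
  have hT0 : (0:ℝ) < T := lt_of_lt_of_le one_pos hT1
  -- value of T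
  have hpos32 : (0:ℝ) < 3*α - 2 := by linarith
  have hD : (0:ℝ) < α*(3*α-2) := mul_pos hα0 hpos32
  have hsqrtpos : 0 < Real.sqrt (α*(3*α-2)) := Real.sqrt_pos.mpr hD
  have h1m4x : 1 - 4*x = (3*α-2)/α := by
    rw [hxdef]; field_simp; ring
  have hsq : T^2 = (α / Real.sqrt (α*(3*α-2)))^2 := by
    rw [div_pow, Real.sq_sqrt hD.le, sq, hTT, h1m4x]
    rw [inv_div]
    rw [div_eq_div_iff hpos32.ne' hD.ne']
    ring
  have hTval : T = α / Real.sqrt (α*(3*α-2)) := by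
    have h2 : 0 ≤ α / Real.sqrt (α*(3*α-2)) := by positivity
    calc T = Real.sqrt (T^2) := (Real.sqrt_sq hT0.le).symm
      _ = Real.sqrt ((α / Real.sqrt (α*(3*α-2)))^2) := by rw [hsq]
      _ = α / Real.sqrt (α*(3*α-2)) := Real.sqrt_sq h2
  have hvalue : α⁻¹^2 * T = 1 / (α * Real.sqrt (α * (3 * α - 2))) := by
    rw [hTval]
    rw [eq_div_iff (by positivity : α * Real.sqrt (α * (3 * α - 2)) ≠ 0)]
    have := hsqrtpos.ne'
    rw [show α⁻¹^2 * (α / Real.sqrt (α*(3*α-2))) * (α * Real.sqrt (α * (3 * α - 2)))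
      = (α⁻¹*α)^2 * (Real.sqrt (α*(3*α-2)) / Real.sqrt (α*(3*α-2))) by ring,
      inv_mul_cancel₀ hαne, div_self this]
    ring
  -- conclude
  have htend : Tendsto (fun n => ∑ k ∈ range n, f k) atTop (nhds T) :=
    hsum.hasSum.tendsto_sum_nat
  have htend2 : Tendsto (fun p => ∑ k ∈ range (p-1), f k) atTop (nhds T) :=
    htend.comp (tendsto_sub_atTop_nat 1)
  have hGfun : ∀ p, Gfun α p = ∑ k ∈ range (p-1), f k := by
    intro p
    rw [hfdef]
    unfold Gfun
    rw [hxdef]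
  rw [← hvalue]
  refine (htend2.const_mul (α⁻¹^2)).congr fun p => ?_
  show α⁻¹^2 * ∑ k ∈ range (p-1), f k = c p
  rw [ceq p, hGfun p]
end

section
/- There exist an integer m₀ ≥ 1 and a real constant c₁ > 0 such that for all integers p ≥ 2 and n ≥ m₀·p, one has 2·(3n+2p−3) · ((2p−3)! / ((p−2)!·(p−2)!)) · 2^{n+1} · (2p+3n−4)! / (n!·(2p+2n−2)!) ≤ c₁ · √(p/n³) · 9^p · (27/2)^n. -/
open Real



lemma fact_eq (n : ℕ) (hn : 1 ≤ n) :
    (n.factorial : ℝ) = Stirling.stirlingSeq n * (Real.sqrt (2*n) * ((n:ℝ)/Real.exp 1)^n) := by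
  have h0 : (0:ℝ) < Real.sqrt (2*n) * ((n:ℝ)/Real.exp 1)^n := by
    have : (0:ℝ) < n := by exact_mod_cast hn
    positivity
  rw [Stirling.stirlingSeq, div_mul_cancel₀]
  exact ne_of_gt h0

lemma fact_upper (n : ℕ) (hn : 1 ≤ n) :
    (n.factorial : ℝ) ≤ 3 * Real.sqrt n * ((n:ℝ)/Real.exp 1)^n := by
  obtain ⟨k, rfl⟩ := Nat.exists_eq_add_of_le hn
  set n := 1 + k
  have hs : Stirling.stirlingSeq n ≤ Real.exp 1 / Real.sqrt 2 := by
    rw [← Stirling.stirlingSeq_one, show n = k + 1 by omega]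
    exact Stirling.stirlingSeq'_antitone (Nat.zero_le k)
  have h2 : Real.sqrt (2*n) = Real.sqrt 2 * Real.sqrt n := by
    rw [Real.sqrt_mul (by norm_num)]
  have he : Real.exp 1 ≤ 3 := by
    have := Real.exp_one_lt_d9; linarith
  have hp : (0:ℝ) ≤ ((n:ℝ)/Real.exp 1)^n := by positivity
  calc (n.factorial : ℝ) = Stirling.stirlingSeq n * (Real.sqrt (2*n) * ((n:ℝ)/Real.exp 1)^n) :=
        fact_eq n (by omega)
    _ ≤ (Real.exp 1 / Real.sqrt 2) * (Real.sqrt 2 * Real.sqrt n * ((n:ℝ)/Real.exp 1)^n) := by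
        rw [h2]
        exact mul_le_mul_of_nonneg_right hs (by positivity)
    _ = Real.exp 1 * Real.sqrt n * ((n:ℝ)/Real.exp 1)^n := by
        have : Real.sqrt 2 ≠ 0 := by positivity
        field_simp
    _ ≤ 3 * Real.sqrt n * ((n:ℝ)/Real.exp 1)^n := by
        have hs3 : (0:ℝ) ≤ Real.sqrt n := Real.sqrt_nonneg _
        nlinarith [mul_nonneg hs3 hp]
      
lemma fact_lower (n : ℕ) (hn : 1 ≤ n) :
    2 * Real.sqrt n * ((n:ℝ)/Real.exp 1)^n ≤ (n.factorial : ℝ) := by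
  obtain ⟨k, rfl⟩ := Nat.exists_eq_add_of_le hn
  set n := 1 + k
  have hs : Real.sqrt π ≤ Stirling.stirlingSeq n := by
    have ht : Filter.Tendsto (Stirling.stirlingSeq ∘ Nat.succ) Filter.atTop (nhds (Real.sqrt π)) :=
      Stirling.tendsto_stirlingSeq_sqrt_pi.comp (Filter.tendsto_add_atTop_nat 1)
    have := Stirling.stirlingSeq'_antitone.le_of_tendsto ht k
    simpa [show k + 1 = n by omega] using this
  have h2 : Real.sqrt (2*n) = Real.sqrt 2 * Real.sqrt n := by
    rw [Real.sqrt_mul (by norm_num)]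
  have hsp : (2:ℝ) ≤ Real.sqrt π * Real.sqrt 2 := by
    rw [← Real.sqrt_mul pi_pos.le]
    have h4 : (4:ℝ) ≤ π * 2 := by nlinarith [Real.pi_gt_three]
    calc (2:ℝ) = Real.sqrt 4 := by
          rw [show (4:ℝ) = 2^2 by norm_num, Real.sqrt_sq (by norm_num)]
      _ ≤ Real.sqrt (π * 2) := Real.sqrt_le_sqrt h4
  have hp : (0:ℝ) ≤ ((n:ℝ)/Real.exp 1)^n := by positivity
  calc 2 * Real.sqrt n * ((n:ℝ)/Real.exp 1)^n
      ≤ (Real.sqrt π * Real.sqrt 2) * Real.sqrt n * ((n:ℝ)/Real.exp 1)^n := by gcongr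
    _ = Real.sqrt π * (Real.sqrt (2*n) * ((n:ℝ)/Real.exp 1)^n) := by rw [h2]; ring
    _ ≤ Stirling.stirlingSeq n * (Real.sqrt (2*n) * ((n:ℝ)/Real.exp 1)^n) := by
        gcongr
    _ = (n.factorial : ℝ) := (fact_eq n (by omega)).symm

lemma pow_scale (a c : ℝ) (k n : ℕ) : (c*a)^(k*n) = (c^k)^n * (a^n)^k := by
  rw [mul_pow, pow_mul, mul_comm k n, pow_mul]

lemma Bnat (n : ℕ) : ∀ m : ℕ, (3*n+2*m).factorial * 4^m * (2*n+2).factorial ≤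
    9^m * ((2*n+2*m+2).factorial * (3*n).factorial)
  | 0 => by simp [mul_comm]
  | (m+1) => by
    have ih := Bnat n m
    have h1 : 3*n+2*(m+1) = (3*n+2*m) + 1 + 1 := by omega
    have h2 : 2*n+2*(m+1)+2 = (2*n+2*m+2) + 1 + 1 := by omega
    rw [h1, h2, Nat.factorial_succ, Nat.factorial_succ, Nat.factorial_succ (2*n+2*m+2+1),
      Nat.factorial_succ (2*n+2*m+2)]
    have key : 4*((3*n+2*m+1+1)*(3*n+2*m+1)) ≤ 9*((2*n+2*m+2+1+1)*(2*n+2*m+2+1)) := by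
      nlinarith
    calc (3*n+2*m+1+1) * ((3*n+2*m+1) * (3*n+2*m).factorial) * 4^(m+1) * (2*n+2).factorial
        = (4*((3*n+2*m+1+1)*(3*n+2*m+1))) * ((3*n+2*m).factorial * 4^m * (2*n+2).factorial) := by
          ring
      _ ≤ (9*((2*n+2*m+2+1+1)*(2*n+2*m+2+1))) * (9^m * ((2*n+2*m+2).factorial * (3*n).factorial)) :=
          Nat.mul_le_mul key ih
      _ = 9^(m+1) * ((2*n+2*m+2+1+1) * ((2*n+2*m+2+1) * (2*n+2*m+2).factorial) * (3*n).factorial) := by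
          ring

lemma sqrt_mul_self' (x : ℝ) (hx : 0 ≤ x) : Real.sqrt x * Real.sqrt x = x :=
  Real.mul_self_sqrt hx

lemma three_fact (n : ℕ) (hn : 1 ≤ n) :
    ((3*n).factorial : ℝ) * Real.sqrt n ≤ (27/4)^n * ((n.factorial : ℝ) * ((2*n).factorial : ℝ)) := by
  have hn0 : (0:ℝ) < n := by exact_mod_cast hn
  set t := ((n:ℝ)/Real.exp 1)^n with ht
  have htpos : 0 < t := by positivity
  have h3 := fact_upper (3*n) (by omega)
  have hL1 := fact_lower n hn
  have hL2 := fact_lower (2*n) (by omega)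
  push_cast at h3 hL2
  have e3 : ((3*(n:ℝ))/Real.exp 1)^(3*n) = 27^n * t^3 := by
    rw [mul_div_assoc, pow_scale, ht]; norm_num
  have e2 : ((2*(n:ℝ))/Real.exp 1)^(2*n) = 4^n * t^2 := by
    rw [mul_div_assoc, pow_scale, ht]; norm_num
  rw [e3, Real.sqrt_mul (by norm_num) (n:ℝ)] at h3
  rw [e2, Real.sqrt_mul (by norm_num) (n:ℝ)] at hL2
  have hrr : Real.sqrt (n:ℝ) * Real.sqrt n = n := Real.mul_self_sqrt hn0.le
  have h32 : (3:ℝ) * Real.sqrt 3 ≤ 4 * Real.sqrt 2 := by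
    have a1 : (3:ℝ) * Real.sqrt 3 = Real.sqrt 27 := by
      rw [show (27:ℝ) = 3^2 * 3 by norm_num, Real.sqrt_mul (by positivity),
        Real.sqrt_sq (by norm_num)]
    have a2 : (4:ℝ) * Real.sqrt 2 = Real.sqrt 32 := by
      rw [show (32:ℝ) = 4^2 * 2 by norm_num, Real.sqrt_mul (by positivity),
        Real.sqrt_sq (by norm_num)]
    rw [a1, a2]
    exact Real.sqrt_le_sqrt (by norm_num)
  have hs3 : (0:ℝ) ≤ Real.sqrt 3 := Real.sqrt_nonneg _
  have hs2 : (0:ℝ) ≤ Real.sqrt 2 := Real.sqrt_nonneg _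
  have hsn : (0:ℝ) ≤ Real.sqrt n := Real.sqrt_nonneg _
  calc ((3*n).factorial : ℝ) * Real.sqrt n
      ≤ (3 * (Real.sqrt 3 * Real.sqrt n) * (27^n * t^3)) * Real.sqrt n := by
        gcongr
    _ = (3 * Real.sqrt 3) * (27:ℝ)^n * t^3 * n := by
        rw [show (3:ℝ) * (Real.sqrt 3 * Real.sqrt n) * (27^n * t^3) * Real.sqrt n
          = (3 * Real.sqrt 3) * (27:ℝ)^n * t^3 * (Real.sqrt n * Real.sqrt n) by ring, hrr]
    _ ≤ (4 * Real.sqrt 2) * (27:ℝ)^n * t^3 * n := by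
        have : (0:ℝ) ≤ (27:ℝ)^n * t^3 * n := by positivity
        nlinarith
    _ = (27/4)^n * ((2 * Real.sqrt n * t) * (2 * (Real.sqrt 2 * Real.sqrt n) * (4^n * t^2))) := by
        have hcomb : ((27:ℝ)/4)^n * 4^n = 27^n := by rw [← mul_pow]; norm_num
        rw [show ((27:ℝ)/4)^n * ((2 * Real.sqrt n * t) * (2 * (Real.sqrt 2 * Real.sqrt n) * (4^n * t^2)))
          = ((27/4)^n * 4^n) * ((4 * Real.sqrt 2) * (Real.sqrt n * Real.sqrt n) * t^3) by ring,
          hcomb, hrr]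
        ring
    _ ≤ (27/4)^n * ((n.factorial : ℝ) * ((2*n).factorial : ℝ)) := by
        gcongr

lemma cb_fact (m : ℕ) :
    ((2*m+1).factorial : ℝ) ≤ (9/2) * Real.sqrt ((m:ℝ)+2) * 4^m * ((m.factorial : ℝ) * (m.factorial : ℝ)) := by
  rcases Nat.eq_zero_or_pos m with rfl | hm
  · have h1 : (1:ℝ) ≤ Real.sqrt 2 := by
      rw [show (1:ℝ) = Real.sqrt 1 from (Real.sqrt_one).symm]
      exact Real.sqrt_le_sqrt one_le_two
    norm_num [Nat.factorial]
    nlinarith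
  · have hm0 : (0:ℝ) < m := by exact_mod_cast hm
    have hm1 : (1:ℝ) ≤ m := by exact_mod_cast hm
    set t := ((m:ℝ)/Real.exp 1)^m with ht
    have htpos : 0 < t := by positivity
    have h2 := fact_upper (2*m) (by omega)
    have hL := fact_lower m hm
    push_cast at h2
    have e2 : ((2*(m:ℝ))/Real.exp 1)^(2*m) = 4^m * t^2 := by
      rw [mul_div_assoc, pow_scale, ht]; norm_num
    rw [e2, Real.sqrt_mul (by norm_num) (m:ℝ)] at h2
    have hrr : Real.sqrt (m:ℝ) * Real.sqrt m = m := Real.mul_self_sqrt hm0.le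
    have key : Real.sqrt 2 * Real.sqrt m ≤ 2 * Real.sqrt ((m:ℝ)+2) := by
      rw [← Real.sqrt_mul (by norm_num), show (2:ℝ) * Real.sqrt ((m:ℝ)+2)
        = Real.sqrt (2^2 * ((m:ℝ)+2)) from by
          rw [Real.sqrt_mul (by positivity), Real.sqrt_sq (by norm_num)]]
      exact Real.sqrt_le_sqrt (by nlinarith)
    have hfc : ((2*m+1).factorial : ℝ) = ((2*m:ℕ)+1) * ((2*m).factorial : ℝ) := by
      rw [Nat.factorial_succ]; push_cast; ring
    have hsm : (0:ℝ) ≤ Real.sqrt m := Real.sqrt_nonneg _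
    have hs2 : (0:ℝ) ≤ Real.sqrt 2 := Real.sqrt_nonneg _
    have hsm2 : (0:ℝ) ≤ Real.sqrt ((m:ℝ)+2) := Real.sqrt_nonneg _
    calc ((2*m+1).factorial : ℝ) = (2*(m:ℝ)+1) * ((2*m).factorial : ℝ) := by
          rw [hfc]; push_cast; ring
      _ ≤ (3*(m:ℝ)) * ((2*m).factorial : ℝ) := by
          gcongr
          linarith
      _ ≤ (3*(m:ℝ)) * (3 * (Real.sqrt 2 * Real.sqrt m) * (4^m * t^2)) := by
          gcongr
      _ ≤ (3*(m:ℝ)) * (3 * (2 * Real.sqrt ((m:ℝ)+2)) * (4^m * t^2)) := by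
          gcongr
      _ = (9/2) * Real.sqrt ((m:ℝ)+2) * 4^m * ((2 * Real.sqrt m * t) * (2 * Real.sqrt m * t)) := by
          rw [show (9:ℝ)/2 * Real.sqrt ((m:ℝ)+2) * 4^m * ((2 * Real.sqrt m * t) * (2 * Real.sqrt m * t))
            = (9/2) * Real.sqrt ((m:ℝ)+2) * 4^m * (4 * (Real.sqrt m * Real.sqrt m) * t^2) by ring, hrr]
          ring
      _ ≤ (9/2) * Real.sqrt ((m:ℝ)+2) * 4^m * ((m.factorial : ℝ) * (m.factorial : ℝ)) := by
          gcongr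

lemma d2_claim (n m : ℕ) (hn1 : 1 ≤ n) :
    ((3*n+2*m).factorial : ℝ) * 4^m * (4*(n:ℝ)^2) * Real.sqrt n ≤
      9^m * (27/4)^n * ((n.factorial : ℝ) * ((2*n+2*m+2).factorial : ℝ)) := by
  have hn0 : (0:ℝ) < n := by exact_mod_cast hn1
  have bnat : (((3*n+2*m).factorial * 4^m * (2*n+2).factorial : ℕ) : ℝ) ≤
      ((9^m * ((2*n+2*m+2).factorial * (3*n).factorial) : ℕ) : ℝ) := by
    exact_mod_cast Bnat n m
  push_cast at bnat
  have f5 := three_fact n hn1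
  have h2n2 : (4*(n:ℝ)^2) * ((2*n).factorial : ℝ) ≤ ((2*n+2).factorial : ℝ) := by
    have e : ((2*n+2).factorial : ℝ) = (2*(n:ℝ)+2)*((2*(n:ℝ)+1)*((2*n).factorial : ℝ)) := by
      rw [show 2*n+2 = (2*n+1)+1 from rfl, Nat.factorial_succ, Nat.factorial_succ]
      push_cast; ring
    rw [e]
    have hf : (0:ℝ) ≤ ((2*n).factorial : ℝ) := by positivity
    nlinarith
  have h2npos : (0:ℝ) < ((2*n).factorial : ℝ) := by exact_mod_cast Nat.factorial_pos _
  refine le_of_mul_le_mul_right ?_ h2npos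
  have hr : (0:ℝ) ≤ Real.sqrt n := Real.sqrt_nonneg _
  calc ((3*n+2*m).factorial : ℝ) * 4^m * (4*(n:ℝ)^2) * Real.sqrt n * ((2*n).factorial : ℝ)
      = (((3*n+2*m).factorial : ℝ) * 4^m * ((4*(n:ℝ)^2) * ((2*n).factorial : ℝ))) * Real.sqrt n := by
        ring
    _ ≤ (((3*n+2*m).factorial : ℝ) * 4^m * ((2*n+2).factorial : ℝ)) * Real.sqrt n := by
        gcongr
    _ ≤ (9^m * (((2*n+2*m+2).factorial : ℝ) * ((3*n).factorial : ℝ))) * Real.sqrt n := by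
        gcongr
    _ = 9^m * ((2*n+2*m+2).factorial : ℝ) * (((3*n).factorial : ℝ) * Real.sqrt n) := by ring
    _ ≤ 9^m * ((2*n+2*m+2).factorial : ℝ) * ((27/4)^n * ((n.factorial : ℝ) * ((2*n).factorial : ℝ))) := by
        gcongr
    _ = 9^m * (27/4)^n * ((n.factorial : ℝ) * ((2*n+2*m+2).factorial : ℝ)) * ((2*n).factorial : ℝ) := by
        ring


/-- Key counting estimate for anchored expansion: there are `m₀ ≥ 1` and `c₁ > 0` such
that for all `p ≥ 2` and `n ≥ m₀·p`,
`2(3n+2p−3) · ((2p−3)!/((p−2)!(p−2)!)) · 2^{n+1} · (2p+3n−4)!/(n!(2p+2n−2)!)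
  ≤ c₁ √(p/n³) 9^p (27/2)^n`. -/
theorem triangulation_count_bound :
    ∃ m₀ : ℕ, 1 ≤ m₀ ∧ ∃ c₁ : ℝ, 0 < c₁ ∧
      ∀ p n : ℕ, 2 ≤ p → m₀ * p ≤ n →
        (2 * (3 * (n : ℝ) + 2 * (p : ℝ) - 3)) *
            ((Nat.factorial (2 * p - 3) : ℝ) /
              ((Nat.factorial (p - 2) : ℝ) * (Nat.factorial (p - 2) : ℝ))) *
            2 ^ (n + 1) *
            ((Nat.factorial (2 * p + 3 * n - 4) : ℝ) /
              ((Nat.factorial n : ℝ) * (Nat.factorial (2 * p + 2 * n - 2) : ℝ))) ≤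
          c₁ * Real.sqrt ((p : ℝ) / (n : ℝ) ^ 3) * 9 ^ p * (27 / 2) ^ n := by
  refine ⟨2, one_le_two, 1, one_pos, ?_⟩
  intro p n hp hmn
  obtain ⟨m, rfl⟩ : ∃ m, p = m + 2 := ⟨p - 2, by omega⟩
  have i1 : 2*(m+2)-3 = 2*m+1 := by omega
  have i2 : (m+2)-2 = m := by omega
  have i3 : 2*(m+2)+3*n-4 = 3*n+2*m := by omega
  have i4 : 2*(m+2)+2*n-2 = 2*n+2*m+2 := by omega
  rw [i1, i2, i3, i4]
  have hn4 : 2*m+4 ≤ n := by omega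
  have hn1 : 1 ≤ n := by omega
  have hn0 : (0:ℝ) < n := by exact_mod_cast hn1
  have hnR : 2*(m:ℝ)+4 ≤ n := by exact_mod_cast hn4
  push_cast
  set r := Real.sqrt n with hr
  set s := Real.sqrt ((m:ℝ)+2) with hs
  have hrpos : 0 < r := Real.sqrt_pos.mpr hn0
  have hspos : 0 < s := Real.sqrt_pos.mpr (by positivity)
  have hsq : Real.sqrt (((m:ℝ)+2) / (n:ℝ)^3) = s/((n:ℝ)*r) := by
    rw [Real.sqrt_div (by positivity), show ((n:ℝ))^3 = (n:ℝ)^2*n by ring,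
      Real.sqrt_mul (by positivity), Real.sqrt_sq hn0.le, hs, hr]
  have d1 : ((2*m+1).factorial : ℝ)/((m.factorial : ℝ) * (m.factorial : ℝ)) ≤ (9/2)*s*4^m := by
    rw [div_le_iff₀ (by positivity)]
    exact cb_fact m
  have d2 : ((3*n+2*m).factorial : ℝ)/((n.factorial : ℝ) * ((2*n+2*m+2).factorial : ℝ)) ≤
      (9^m/4^m)*(27/4)^n/(4*(n:ℝ)^2*r) := by
    rw [div_le_div_iff₀ (by positivity) (by positivity)]
    have h4 : (0:ℝ) < (4:ℝ)^m := by positivity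
    rw [← mul_le_mul_iff_of_pos_right h4]
    calc ((3*n+2*m).factorial : ℝ) * (4*(n:ℝ)^2*r) * 4^m
        = ((3*n+2*m).factorial : ℝ) * 4^m * (4*(n:ℝ)^2) * r := by ring
      _ ≤ 9^m * (27/4)^n * ((n.factorial : ℝ) * ((2*n+2*m+2).factorial : ℝ)) :=
          d2_claim n m hn1
      _ = (9^m/4^m)*(27/4)^n * ((n.factorial : ℝ) * ((2*n+2*m+2).factorial : ℝ)) * 4^m := by
          field_simp
  rw [hsq, pow_succ]
  have hM : (0:ℝ) ≤ s*9^m*27^n/(2^n*(n:ℝ)*r) := by positivity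
  have E1 : (8*(n:ℝ))*((9/2)*s*4^m)*(2^n*2)*((9^m/4^m)*(27/4)^n/(4*(n:ℝ)^2*r))
      = 18*(s*9^m*27^n/(2^n*(n:ℝ)*r)) := by
    rw [div_pow, show (4:ℝ)^n = 2^n*2^n by rw [← mul_pow]; norm_num]
    field_simp
    ring
  have E2 : 1*(s/((n:ℝ)*r))*9^(m+2)*((27:ℝ)/2)^n = 81*(s*9^m*27^n/(2^n*(n:ℝ)*r)) := by
    rw [div_pow, pow_add]
    field_simp
    ring
  calc (2 * (3 * (n : ℝ) + 2 * ((m:ℝ)+2) - 3)) *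
        (((2*m+1).factorial : ℝ) / ((m.factorial : ℝ) * (m.factorial : ℝ))) * (2^n*2) *
        (((3*n+2*m).factorial : ℝ) / ((n.factorial : ℝ) * ((2*n+2*m+2).factorial : ℝ)))
      = (6*(n:ℝ)+4*(m:ℝ)+2) *
        (((2*m+1).factorial : ℝ) / ((m.factorial : ℝ) * (m.factorial : ℝ))) * (2^n*2) *
        (((3*n+2*m).factorial : ℝ) / ((n.factorial : ℝ) * ((2*n+2*m+2).factorial : ℝ))) := by
        ring
    _ ≤ (8*(n:ℝ))*((9/2)*s*4^m)*(2^n*2)*((9^m/4^m)*(27/4)^n/(4*(n:ℝ)^2*r)) := by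
        gcongr
        linarith
    _ = 18*(s*9^m*27^n/(2^n*(n:ℝ)*r)) := E1
    _ ≤ 81*(s*9^m*27^n/(2^n*(n:ℝ)*r)) := by linarith
    _ = 1*(s/((n:ℝ)*r))*9^(m+2)*((27:ℝ)/2)^n := E2.symm
end
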